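/- arXiv:1412.5816 — 11 statements merged into one kernel-verified Lean document; each statement's English description precedes it below -/
import Mathlib

section
/- Let X be a separable Banach space and μ a Borel probability measure on X with full support. Let û ∈ X be a MAP estimate for μ, let h ∈ X, and suppose the limit r = lim_{ε→0} μ(B_ε(û − h))/μ(B_ε(û)) exists. Then r ≤ 1. -/
open MeasureTheory Metric Filter Topology
open scoped ENNReal

/-- Lemma 3.4: every MAP estimate is a weak MAP estimate:
the small-ball ratio limit at a MAP estimate is at most one. -/
theorem stmt1 {X : Type*} [NormedAddCommGroup X] [NormedSpace ℝ X] [CompleteSpace X]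
    [TopologicalSpace.SeparableSpace X] [MeasurableSpace X] [BorelSpace X]
    (μ : Measure X) [IsProbabilityMeasure μ]
    (hfull : ∀ u : X, ∀ ε : ℝ, 0 < ε → 0 < μ (ball u ε))
    (uhat : X)
    (hMAP : Tendsto (fun ε : ℝ => μ (ball uhat ε) / (⨆ u : X, μ (ball u ε)))
      (𝓝[>] 0) (𝓝 1))
    (h : X) (r : ℝ≥0∞)
    (hr : Tendsto (fun ε : ℝ => μ (ball (uhat - h) ε) / μ (ball uhat ε))
      (𝓝[>] 0) (𝓝 r)) :
    r ≤ 1 := by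
  have hinv : Tendsto (fun ε : ℝ => (μ (ball uhat ε) / (⨆ u : X, μ (ball u ε)))⁻¹)
      (𝓝[>] 0) (𝓝 1) := by
    simpa using hMAP.inv
  refine le_of_tendsto_of_tendsto hr hinv ?_
  filter_upwards [self_mem_nhdsWithin] with ε hε
  have hεpos : 0 < ε := hε
  have hb : 0 < μ (ball uhat ε) := hfull uhat ε hεpos
  have hS : (⨆ u : X, μ (ball u ε)) ≤ 1 := by
    apply iSup_le; intro u
    exact (measure_mono (Set.subset_univ _)).trans (by simp)
  have hSne : (⨆ u : X, μ (ball u ε)) ≠ ⊤ := (hS.trans_lt (by norm_num)).ne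
  rw [ENNReal.inv_div (Or.inl hSne) (Or.inr hb.ne')]
  exact ENNReal.div_le_div_right (le_iSup (fun u => μ (ball u ε)) (uhat - h)) _
end

section
/- Let X be a separable Banach space and μ a convex Borel probability measure on X. If û and v̂ are MAP estimates for μ and t ∈ [0,1], then w = (1−t)û + t v̂ is also a MAP estimate for μ. -/
open MeasureTheory Metric Filter Topology Pointwise
open scoped ENNReal

/-- Proposition 3.6(1): for a convex measure, a convex combination of MAP estimates
is again a MAP estimate. -/
theorem stmt2 {X : Type*} [NormedAddCommGroup X] [NormedSpace ℝ X] [CompleteSpace X]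
    [TopologicalSpace.SeparableSpace X] [MeasurableSpace X] [BorelSpace X]
    (μ : Measure X) [IsProbabilityMeasure μ]
    (hconv : ∀ (A B : Set X), MeasurableSet A → MeasurableSet B →
      ∀ t : ℝ, 0 ≤ t → t ≤ 1 →
      μ A ^ t * μ B ^ (1 - t) ≤ μ (t • A + (1 - t) • B))
    (uhat vhat : X)
    (hu : Tendsto (fun ε : ℝ => μ (ball uhat ε) / (⨆ u : X, μ (ball u ε)))
      (𝓝[>] 0) (𝓝 1))
    (hv : Tendsto (fun ε : ℝ => μ (ball vhat ε) / (⨆ u : X, μ (ball u ε)))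
      (𝓝[>] 0) (𝓝 1))
    (t : ℝ) (ht0 : 0 ≤ t) (ht1 : t ≤ 1) :
    Tendsto (fun ε : ℝ =>
        μ (ball ((1 - t) • uhat + t • vhat) ε) / (⨆ u : X, μ (ball u ε)))
      (𝓝[>] 0) (𝓝 1) := by
  rcases ht0.eq_or_lt with h0 | h0
  · simpa [← h0] using hu
  rcases ht1.eq_or_lt with h1 | h1
  · simpa [h1] using hv
  -- now 0 < t < 1
  have ht1' : (0:ℝ) < 1 - t := by linarith
  set M : ℝ → ℝ≥0∞ := fun ε => ⨆ u : X, μ (ball u ε) with hM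
  -- key measure inequality
  have key : ∀ ε : ℝ, 0 < ε →
      μ (ball vhat ε) ^ t * μ (ball uhat ε) ^ (1 - t)
        ≤ μ (ball ((1 - t) • uhat + t • vhat) ε) := by
    intro ε hε
    refine le_trans (hconv _ _ measurableSet_ball measurableSet_ball t ht0 ht1)
      (measure_mono ?_)
    rw [Set.add_subset_iff]
    rintro x ⟨y, hy, rfl⟩ z ⟨w, hw, rfl⟩
    rw [mem_ball] at hy hw ⊢
    have : t • y + (1 - t) • w - ((1 - t) • uhat + t • vhat)
        = t • (y - vhat) + (1 - t) • (w - uhat) := by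
      simp [smul_sub]; abel
    calc dist (t • y + (1 - t) • w) ((1 - t) • uhat + t • vhat)
        = ‖t • (y - vhat) + (1 - t) • (w - uhat)‖ := by rw [dist_eq_norm, this]
      _ ≤ t * ‖y - vhat‖ + (1 - t) * ‖w - uhat‖ := by
          refine (norm_add_le _ _).trans ?_
          rw [norm_smul, norm_smul, Real.norm_of_nonneg ht0,
            Real.norm_of_nonneg ht1'.le]
      _ < t * ε + (1 - t) * ε := by
          apply add_lt_add
          · exact (mul_lt_mul_iff_right₀ h0).2 (by rw [← dist_eq_norm]; exact hy)
          · exact (mul_lt_mul_iff_right₀ ht1').2 (by rw [← dist_eq_norm]; exact hw)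
      _ = ε := by ring
  -- eventually M ε ≠ 0
  have hMle : ∀ ε : ℝ, ∀ x : X, μ (ball x ε) ≤ M ε := fun ε x => le_iSup (fun u => μ (ball u ε)) x
  have hMtop : ∀ ε : ℝ, M ε ≠ ⊤ := by
    intro ε
    exact ne_top_of_le_ne_top ENNReal.one_ne_top (iSup_le fun u => prob_le_one)
  have hMne : ∀ᶠ ε in 𝓝[>] (0:ℝ), M ε ≠ 0 := by
    filter_upwards [hu.eventually_const_lt (show (1:ℝ≥0∞)/2 < 1 by norm_num)] with ε hε
    intro h
    have h0' : μ (ball uhat ε) = 0 := le_antisymm (h ▸ hMle ε uhat) zero_le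
    rw [show (⨆ u : X, μ (ball u ε)) = M ε from rfl, h, h0'] at hε
    simp at hε
  -- lower bound function tends to 1
  have hlow : Tendsto (fun ε : ℝ =>
      (μ (ball vhat ε) / M ε) ^ t * (μ (ball uhat ε) / M ε) ^ (1 - t))
      (𝓝[>] 0) (𝓝 1) := by
    have h1 : Tendsto (fun ε : ℝ => (μ (ball vhat ε) / M ε) ^ t) (𝓝[>] 0) (𝓝 1) := by
      have := ((ENNReal.continuous_rpow_const (y := t)).tendsto 1).comp hv
      simpa [hM, Function.comp_def] using this
    have h2 : Tendsto (fun ε : ℝ => (μ (ball uhat ε) / M ε) ^ (1 - t)) (𝓝[>] 0) (𝓝 1) := by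
      have := ((ENNReal.continuous_rpow_const (y := 1 - t)).tendsto 1).comp hu
      simpa [hM, Function.comp_def] using this
    simpa using ENNReal.Tendsto.mul h1 (Or.inl one_ne_zero) h2 (Or.inl one_ne_zero)
  refine tendsto_of_tendsto_of_tendsto_of_le_of_le' hlow tendsto_const_nhds ?_ ?_
  · filter_upwards [hMne, self_mem_nhdsWithin] with ε hM0 hε
    have hMinv_top : (M ε)⁻¹ ≠ ⊤ := by simp [hM0]
    have hMinv_0 : (M ε)⁻¹ ≠ 0 := by simp [hMtop ε]
    calc (μ (ball vhat ε) / M ε) ^ t * (μ (ball uhat ε) / M ε) ^ (1 - t)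
        = μ (ball vhat ε) ^ t * μ (ball uhat ε) ^ (1 - t)
            * ((M ε)⁻¹ ^ t * (M ε)⁻¹ ^ (1 - t)) := by
          rw [div_eq_mul_inv, div_eq_mul_inv,
            ENNReal.mul_rpow_of_ne_top (measure_ne_top μ _) hMinv_top,
            ENNReal.mul_rpow_of_ne_top (measure_ne_top μ _) hMinv_top]
          ring
      _ = μ (ball vhat ε) ^ t * μ (ball uhat ε) ^ (1 - t) * (M ε)⁻¹ := by
          rw [← ENNReal.rpow_add t (1 - t) hMinv_0 hMinv_top]
          norm_num
      _ ≤ μ (ball ((1 - t) • uhat + t • vhat) ε) * (M ε)⁻¹ :=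
          mul_le_mul_left (key ε hε) _
      _ = μ (ball ((1 - t) • uhat + t • vhat) ε) / M ε := (div_eq_mul_inv _ _).symm
  · filter_upwards with ε
    exact le_trans (ENNReal.div_le_div_right (hMle ε _) _) ENNReal.div_self_le_one
end

section
/- Let X be a separable Banach space, μ a convex Borel probability measure on X with full support, and E a linear subspace of X. Let û, v̂ ∈ X be such that for every h ∈ E the limits r_h(û) = lim_{ε→0} μ(B_ε(û − h))/μ(B_ε(û)) and r_h(v̂) = lim_{ε→0} μ(B_ε(v̂ − h))/μ(B_ε(v̂)) exist and satisfy r_h(û) ≤ 1 and r_h(v̂) ≤ 1. Assume v̂ − û ∈ E and let t ∈ [0,1], w = (1−t)û + t v̂. Then for every h ∈ E, limsup_{ε→0} μ(B_ε(w − h))/μ(B_ε(w)) ≤ 1. -/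
open MeasureTheory Metric Filter Topology Pointwise
open scoped ENNReal

private lemma ball_comb {X : Type*} [NormedAddCommGroup X] [NormedSpace ℝ X]
    (x y : X) (ε t : ℝ) (ht0 : 0 ≤ t) (ht1 : t ≤ 1) :
    t • ball x ε + (1 - t) • ball y ε ⊆ ball (t • x + (1 - t) • y) ε := by
  rintro c ⟨p, ⟨p', hp', rfl⟩, q, ⟨q', hq', rfl⟩, rfl⟩
  simp only [mem_ball, dist_eq_norm] at *
  have key : t • p' + (1 - t) • q' - (t • x + (1 - t) • y)
      = t • (p' - x) + (1 - t) • (q' - y) := by module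
  rw [key]
  calc ‖t • (p' - x) + (1 - t) • (q' - y)‖
      ≤ ‖t • (p' - x)‖ + ‖(1 - t) • (q' - y)‖ := norm_add_le _ _
    _ = t * ‖p' - x‖ + (1 - t) * ‖q' - y‖ := by
        rw [norm_smul, norm_smul, Real.norm_eq_abs, Real.norm_eq_abs,
          abs_of_nonneg ht0, abs_of_nonneg (by linarith)]
    _ < ε := by
        rcases eq_or_lt_of_le ht0 with h0 | h0
        · subst h0; simpa using hq'
        · rcases eq_or_lt_of_le ht1 with h1 | h1
          · rw [h1]; simpa using hp'
          · nlinarith [norm_nonneg (p' - x), norm_nonneg (q' - y)]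

private lemma div_div_div_cancel' (x y z : ℝ≥0∞) (hy0 : y ≠ 0) (hyt : y ≠ ⊤)
    (hz0 : z ≠ 0) (hzt : z ≠ ⊤) : (x / z) / (y / z) = x / y := by
  calc (x / z) / (y / z) = x * (z⁻¹ * z) * y⁻¹ := by
        rw [div_eq_mul_inv, div_eq_mul_inv, div_eq_mul_inv,
          ENNReal.mul_inv (Or.inl hy0) (Or.inl hyt), inv_inv]; ring
    _ = x / y := by rw [ENNReal.inv_mul_cancel hz0 hzt, mul_one, div_eq_mul_inv]

/-- Proposition 3.6(2): a convex combination of weak MAP estimates differing by an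
element of `E` is again a weak MAP estimate. -/
theorem stmt3 {X : Type*} [NormedAddCommGroup X] [NormedSpace ℝ X] [CompleteSpace X]
    [TopologicalSpace.SeparableSpace X] [MeasurableSpace X] [BorelSpace X]
    (μ : Measure X) [IsProbabilityMeasure μ]
    (hconv : ∀ (A B : Set X), MeasurableSet A → MeasurableSet B →
      ∀ t : ℝ, 0 ≤ t → t ≤ 1 →
      μ A ^ t * μ B ^ (1 - t) ≤ μ (t • A + (1 - t) • B))
    (hfull : ∀ u : X, ∀ ε : ℝ, 0 < ε → 0 < μ (ball u ε))
    (E : Submodule ℝ X) (uhat vhat : X)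
    (hu : ∀ h ∈ E, ∃ r : ℝ≥0∞, r ≤ 1 ∧
      Tendsto (fun ε : ℝ => μ (ball (uhat - h) ε) / μ (ball uhat ε)) (𝓝[>] 0) (𝓝 r))
    (hv : ∀ h ∈ E, ∃ r : ℝ≥0∞, r ≤ 1 ∧
      Tendsto (fun ε : ℝ => μ (ball (vhat - h) ε) / μ (ball vhat ε)) (𝓝[>] 0) (𝓝 r))
    (hvu : vhat - uhat ∈ E)
    (t : ℝ) (ht0 : 0 ≤ t) (ht1 : t ≤ 1)
    (w : X) (hw : w = (1 - t) • uhat + t • vhat) :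
    ∀ h ∈ E,
      Filter.limsup (fun ε : ℝ => μ (ball (w - h) ε) / μ (ball w ε)) (𝓝[>] 0) ≤ 1 := by
  intro h hh
  have hne : ∀ (x : X) (ε : ℝ), 0 < ε → μ (ball x ε) ≠ 0 :=
    fun x ε hε => (hfull x ε hε).ne'
  have hnt : ∀ (x : X) (ε : ℝ), μ (ball x ε) ≠ ⊤ := fun x ε => (measure_lt_top μ _).ne
  -- Step A : μ(ball vhat ε)/μ(ball uhat ε) → 1
  obtain ⟨r, hr1, hrT⟩ := hu (uhat - vhat) (by simpa using E.neg_mem hvu)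
  rw [sub_sub_cancel] at hrT
  obtain ⟨r', hr'1, hr'T⟩ := hv (vhat - uhat) hvu
  rw [sub_sub_cancel] at hr'T
  have hrne : r ≠ ⊤ := (hr1.trans_lt ENNReal.one_lt_top).ne
  have hr'ne : r' ≠ ⊤ := (hr'1.trans_lt ENNReal.one_lt_top).ne
  have hmulT : Tendsto (fun ε : ℝ =>
      (μ (ball vhat ε) / μ (ball uhat ε)) * (μ (ball uhat ε) / μ (ball vhat ε)))
      (𝓝[>] 0) (𝓝 (r * r')) :=
    ENNReal.Tendsto.mul hrT (Or.inr hr'ne) hr'T (Or.inr hrne)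
  have hmul1 : Tendsto (fun ε : ℝ =>
      (μ (ball vhat ε) / μ (ball uhat ε)) * (μ (ball uhat ε) / μ (ball vhat ε)))
      (𝓝[>] 0) (𝓝 1) := by
    refine Tendsto.congr' ?_ tendsto_const_nhds
    filter_upwards [self_mem_nhdsWithin] with ε hε
    have hε : (0:ℝ) < ε := hε
    symm
    calc μ (ball vhat ε) / μ (ball uhat ε) * (μ (ball uhat ε) / μ (ball vhat ε))
        = (μ (ball vhat ε) * (μ (ball vhat ε))⁻¹) * ((μ (ball uhat ε))⁻¹ * μ (ball uhat ε)) := by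
          rw [div_eq_mul_inv, div_eq_mul_inv]; ring
      _ = 1 := by
          rw [ENNReal.mul_inv_cancel (hne _ _ hε) (hnt _ _),
            ENNReal.inv_mul_cancel (hne _ _ hε) (hnt _ _), mul_one]
  have hrr' : r * r' = 1 := tendsto_nhds_unique hmulT hmul1
  have hr : r = 1 := le_antisymm hr1 (by
    calc (1:ℝ≥0∞) = r * r' := hrr'.symm
      _ ≤ r * 1 := mul_le_mul_right hr'1 r
      _ = r := mul_one r)
  -- Step B : b = lim μ(ball w ε)/μ(ball uhat ε)
  obtain ⟨b, hb1, hbT⟩ := hu (t • (uhat - vhat)) (E.smul_mem t (by simpa using E.neg_mem hvu))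
  have hwkey : uhat - t • (uhat - vhat) = w := by rw [hw]; module
  rw [hwkey] at hbT
  -- Step C : 1 ≤ b
  have hineq : ∀ᶠ ε in 𝓝[>] (0:ℝ),
      (μ (ball vhat ε) / μ (ball uhat ε)) ^ t ≤ μ (ball w ε) / μ (ball uhat ε) := by
    filter_upwards [self_mem_nhdsWithin] with ε hε
    have hε : (0:ℝ) < ε := hε
    have hsub := ball_comb vhat uhat ε t ht0 ht1
    have hconv' := hconv (ball vhat ε) (ball uhat ε) measurableSet_ball measurableSet_ball t ht0 ht1
    have hwball : t • vhat + (1 - t) • uhat = w := by rw [hw]; module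
    have hμ : μ (ball vhat ε) ^ t * μ (ball uhat ε) ^ (1 - t) ≤ μ (ball w ε) := by
      refine hconv'.trans (measure_mono ?_)
      rw [← hwball]; exact hsub
    have heq : (μ (ball vhat ε) / μ (ball uhat ε)) ^ t
        = μ (ball vhat ε) ^ t * μ (ball uhat ε) ^ (1 - t) / μ (ball uhat ε) := by
      rw [ENNReal.div_rpow_of_nonneg _ _ ht0]
      have hu1 : μ (ball uhat ε) = μ (ball uhat ε) ^ t * μ (ball uhat ε) ^ (1 - t) := by
        rw [← ENNReal.rpow_add _ _ (hne _ _ hε) (hnt _ _)]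
        norm_num
      nth_rewrite 3 [hu1]
      rw [ENNReal.mul_div_mul_right _ _
        (ENNReal.rpow_pos (hfull _ _ hε) (hnt _ _)).ne'
        (ENNReal.rpow_ne_top_of_nonneg (by linarith) (hnt _ _))]
    rw [heq]
    exact ENNReal.div_le_div_right hμ _
  have hlhsT : Tendsto (fun ε : ℝ => (μ (ball vhat ε) / μ (ball uhat ε)) ^ t)
      (𝓝[>] 0) (𝓝 1) := by
    have := (ENNReal.continuous_rpow_const (y := t)).tendsto (1 : ℝ≥0∞)
    have h2 := this.comp (hr ▸ hrT)
    simpa [ENNReal.one_rpow, Function.comp_def] using h2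
  have h1b : (1:ℝ≥0∞) ≤ b := le_of_tendsto_of_tendsto hlhsT hbT hineq
  have hb : b = 1 := le_antisymm hb1 h1b
  -- Step D : a = lim μ(ball (w-h) ε)/μ(ball uhat ε)
  obtain ⟨a, ha1, haT⟩ := hu (h + t • (uhat - vhat))
    (E.add_mem hh (E.smul_mem t (by simpa using E.neg_mem hvu)))
  have hwh : uhat - (h + t • (uhat - vhat)) = w - h := by rw [hw]; module
  rw [hwh] at haT
  -- Step E : ratio at w tends to a
  have hane : a ≠ ⊤ := (ha1.trans_lt ENNReal.one_lt_top).ne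
  have hdivT : Tendsto (fun ε : ℝ =>
      (μ (ball (w - h) ε) / μ (ball uhat ε)) / (μ (ball w ε) / μ (ball uhat ε)))
      (𝓝[>] 0) (𝓝 (a / b)) :=
    ENNReal.Tendsto.div haT (Or.inr (hb ▸ one_ne_zero)) hbT (Or.inr hane)
  have hfinal : Tendsto (fun ε : ℝ => μ (ball (w - h) ε) / μ (ball w ε))
      (𝓝[>] 0) (𝓝 (a / b)) := by
    refine hdivT.congr' ?_
    filter_upwards [self_mem_nhdsWithin] with ε hε
    have hε : (0:ℝ) < ε := hε
    exact div_div_div_cancel' _ _ _ (hne w ε hε) (hnt w ε) (hne uhat ε hε) (hnt uhat ε)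
  rw [hfinal.limsup_eq, hb]
  simpa using ha1
end

section
/- Let X be a separable Banach space, μ a Borel probability measure on X with full support, û ∈ X, h ∈ X, and β : X → ℝ a continuous function. Suppose that for every t ∈ ℝ the limit lim_{ε→0} μ(B_ε(û − t h))/μ(B_ε(û)) exists, equals exp(∫_0^t β(û − s h) ds), and is at most 1. Then β(û) = 0. -/
open MeasureTheory Metric Filter Topology
open scoped ENNReal

/-- Theorem 3.7: at a weak MAP estimate, the continuous representative of the
logarithmic derivative vanishes. -/
theorem stmt4 {X : Type*} [NormedAddCommGroup X] [NormedSpace ℝ X] [CompleteSpace X]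
    [TopologicalSpace.SeparableSpace X] [MeasurableSpace X] [BorelSpace X]
    (μ : Measure X) [IsProbabilityMeasure μ]
    (hfull : ∀ u : X, ∀ ε : ℝ, 0 < ε → 0 < μ (ball u ε))
    (uhat h : X) (β : X → ℝ) (hβ : Continuous β)
    (hlim : ∀ t : ℝ,
      Tendsto (fun ε : ℝ =>
          (μ (ball (uhat - t • h) ε)).toReal / (μ (ball uhat ε)).toReal)
        (𝓝[>] 0) (𝓝 (Real.exp (∫ s in (0:ℝ)..t, β (uhat - s • h)))) ∧
      Real.exp (∫ s in (0:ℝ)..t, β (uhat - s • h)) ≤ 1) :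
    β uhat = 0 := by
  set f : ℝ → ℝ := fun s => β (uhat - s • h) with hf
  have hfc : Continuous f := hβ.comp (by continuity)
  set F : ℝ → ℝ := fun t => ∫ s in (0:ℝ)..t, f s with hF
  have hderiv : HasDerivAt F (f 0) 0 :=
    intervalIntegral.integral_hasDerivAt_right (hfc.intervalIntegrable _ _)
      hfc.aestronglyMeasurable.stronglyMeasurableAtFilter hfc.continuousAt
  have hmax : IsLocalMax F 0 := by
    have : ∀ t, F t ≤ F 0 := by
      intro t
      have h1 := (hlim t).2
      have : F t ≤ 0 := by
        have := Real.exp_le_exp.mp (by simpa using h1)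
        simpa [F] using this
      simpa [F] using this
    exact Filter.Eventually.of_forall this
  have := hmax.hasDerivAt_eq_zero hderiv
  simpa [f] using this
end

section
/- Let X be a separable Banach space, μ a convex Borel probability measure on X with full support, ũ ∈ X and h ∈ X. Suppose that for every t ∈ [0,1] the limit r(t) = lim_{ε→0} μ(B_ε(ũ − t h))/μ(B_ε(ũ)) exists (so r(0) = 1), and that r has right derivative 0 at t = 0, i.e. lim_{t→0+} (r(t) − 1)/t = 0. Then r(1) ≤ 1. -/
open MeasureTheory Metric Filter Topology Pointwise
open scoped ENNReal

/-- Theorem 3.8: for a convex measure, a zero point of the logarithmic derivative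
(expressed via the vanishing right derivative of the small-ball ratio) is a weak
MAP estimate. -/
theorem stmt5 {X : Type*} [NormedAddCommGroup X] [NormedSpace ℝ X] [CompleteSpace X]
    [TopologicalSpace.SeparableSpace X] [MeasurableSpace X] [BorelSpace X]
    (μ : Measure X) [IsProbabilityMeasure μ]
    (hconv : ∀ (A B : Set X), MeasurableSet A → MeasurableSet B →
      ∀ t : ℝ, 0 ≤ t → t ≤ 1 →
      μ A ^ t * μ B ^ (1 - t) ≤ μ (t • A + (1 - t) • B))
    (hfull : ∀ u : X, ∀ ε : ℝ, 0 < ε → 0 < μ (ball u ε))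
    (utilde h : X) (r : ℝ → ℝ)
    (hr : ∀ t ∈ Set.Icc (0:ℝ) 1,
      Tendsto (fun ε : ℝ =>
          (μ (ball (utilde - t • h) ε)).toReal / (μ (ball utilde ε)).toReal)
        (𝓝[>] 0) (𝓝 (r t)))
    (hderiv : Tendsto (fun t : ℝ => (r t - 1) / t) (𝓝[>] 0) (𝓝 0)) :
    r 1 ≤ 1 := by
  by_contra hcon
  push_neg at hcon
  have hr1pos : (0:ℝ) < r 1 := lt_trans one_pos hcon
  -- Step 1: key inequality r 1 ^ t ≤ r t for t ∈ (0,1]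
  have key : ∀ t ∈ Set.Ioc (0:ℝ) 1, r 1 ^ t ≤ r t := by
    intro t ht
    obtain ⟨ht0, ht1⟩ := ht
    have h1 := hr 1 ⟨zero_le_one, le_refl 1⟩
    have h2 := hr t ⟨ht0.le, ht1⟩
    have hlim : Tendsto (fun ε : ℝ =>
        ((μ (ball (utilde - (1:ℝ) • h) ε)).toReal / (μ (ball utilde ε)).toReal) ^ t)
        (𝓝[>] (0:ℝ)) (𝓝 (r 1 ^ t)) := h1.rpow_const (Or.inr ht0.le)
    simp only [one_smul] at hlim
    refine le_of_tendsto_of_tendsto hlim h2 ?_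
    filter_upwards [self_mem_nhdsWithin] with ε (hε : ε ∈ Set.Ioi (0:ℝ))
    simp only [Set.mem_Ioi] at hε
    set A := ball (utilde - h) ε with hA
    set B := ball utilde ε with hB
    set C := ball (utilde - t • h) ε with hC
    -- Minkowski inclusion
    have hsub : t • A + (1 - t) • B ⊆ C := by
      rintro x ⟨y, hy, z, hz, rfl⟩
      obtain ⟨a, ha, rfl⟩ := hy
      obtain ⟨b, hb, rfl⟩ := hz
      rw [hA, mem_ball] at ha
      rw [hB, mem_ball] at hb
      rw [hC, mem_ball]
      have heq : t • a + (1 - t) • b - (utilde - t • h)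
          = t • (a - (utilde - h)) + (1 - t) • (b - utilde) := by
        module
      rw [dist_eq_norm, heq]
      calc ‖t • (a - (utilde - h)) + (1 - t) • (b - utilde)‖
          ≤ ‖t • (a - (utilde - h))‖ + ‖(1 - t) • (b - utilde)‖ := norm_add_le _ _
        _ = t * ‖a - (utilde - h)‖ + (1 - t) * ‖b - utilde‖ := by
            rw [norm_smul, norm_smul, Real.norm_eq_abs, Real.norm_eq_abs,
              abs_of_pos ht0, abs_of_nonneg (by linarith : (0:ℝ) ≤ 1 - t)]
        _ < t * ε + (1 - t) * ε := by
            rcases eq_or_lt_of_le (by linarith : (0:ℝ) ≤ 1 - t) with h1t | h1t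
            · have ht1' : t = 1 := by linarith
              have := ha
              rw [dist_eq_norm] at this
              rw [← h1t]
              simp only [zero_mul, add_zero]
              exact mul_lt_mul_of_pos_left this ht0
            · have ha' := ha; have hb' := hb
              rw [dist_eq_norm] at ha' hb'
              have := mul_lt_mul_of_pos_left ha' ht0
              have := mul_lt_mul_of_pos_left hb' h1t
              linarith
        _ = ε := by ring
    -- convexity inequality on measures
    have hmeas : μ A ^ t * μ B ^ (1 - t) ≤ μ C := by
      refine le_trans (hconv A B measurableSet_ball measurableSet_ball t ht0.le ht1) ?_
      exact measure_mono hsub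
    -- pass to real numbers
    have hAfin : μ A ≠ ⊤ := measure_ne_top μ A
    have hBfin : μ B ≠ ⊤ := measure_ne_top μ B
    have hCfin : μ C ≠ ⊤ := measure_ne_top μ C
    have hreal : (μ A).toReal ^ t * (μ B).toReal ^ (1 - t) ≤ (μ C).toReal := by
      rw [ENNReal.toReal_rpow, ENNReal.toReal_rpow, ← ENNReal.toReal_mul]
      refine ENNReal.toReal_mono hCfin hmeas
    set a := (μ A).toReal with ha'
    set b := (μ B).toReal with hb'
    set c := (μ C).toReal with hc'
    have ha0 : 0 ≤ a := ENNReal.toReal_nonneg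
    have hb0 : 0 < b := by
      rw [hb']
      exact ENNReal.toReal_pos (hfull utilde ε hε).ne' hBfin
    have hbt : 0 < b ^ t := Real.rpow_pos_of_pos hb0 t
    show (a / b) ^ t ≤ c / b
    rw [Real.div_rpow ha0 hb0.le, div_le_div_iff₀ hbt hb0]
    calc a ^ t * b = (a ^ t * b ^ (1 - t)) * b ^ t := by
          rw [mul_assoc, ← Real.rpow_add hb0]
          norm_num
      _ ≤ c * b ^ t := mul_le_mul_of_nonneg_right hreal hbt.le
  -- Step 2: limit of (r 1 ^ t - 1)/t as t → 0+ is log (r 1)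
  have hlog : Tendsto (fun t : ℝ => (r 1 ^ t - 1) / t) (𝓝[>] (0:ℝ))
      (𝓝 (Real.log (r 1))) := by
    have hd : HasDerivAt (fun y : ℝ => r 1 ^ y) (Real.log (r 1)) 0 := by
      have := (Real.hasStrictDerivAt_const_rpow hr1pos 0).hasDerivAt
      simpa using this
    have hslope := hasDerivAt_iff_tendsto_slope.mp hd
    have hmono : 𝓝[>] (0:ℝ) ≤ 𝓝[≠] (0:ℝ) :=
      nhdsWithin_mono 0 (fun x hx => ne_of_gt hx)
    refine (hslope.mono_left hmono).congr' ?_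
    filter_upwards [self_mem_nhdsWithin] with t ht
    simp [slope_def_field, Real.rpow_zero]
  -- Step 3: compare and derive contradiction
  have hle : Real.log (r 1) ≤ 0 := by
    refine le_of_tendsto_of_tendsto hlog hderiv ?_
    filter_upwards [Ioo_mem_nhdsGT_of_mem (Set.left_mem_Ico.mpr one_pos)] with t ht
    have hkey := key t ⟨ht.1, ht.2.le⟩
    exact (div_le_div_iff_of_pos_right ht.1).mpr (by linarith)
  have : 0 < Real.log (r 1) := Real.log_pos hcon
  linarith
end

section
/- Let X be a separable Banach space, λ a Borel probability measure on X, h ∈ X, and β_h ∈ L¹(λ) such that for every Borel set A ⊆ X: lim_{t→0} (λ(A + t h) − λ(A))/t = ∫_A β_h dλ. Let A_op : X → ℝ^M be a bounded linear map, m ∈ ℝ^M, f(u) = exp(−½|A_op u − m|²), G = ∫_X f dλ, and let μ be the probability measure with μ(A) = G^{−1} ∫_A f dλ. Then for every Borel set A ⊆ X: lim_{t→0} (μ(A + t h) − μ(A))/t = ∫_A (β_h(u) − ⟨A_op u − m, A_op h⟩_{ℝ^M}) dμ(u). -/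
open MeasureTheory Metric Filter Topology RealInnerProductSpace
open scoped ENNReal


lemma aux_xexp (x : ℝ) (hx : 0 ≤ x) : x * Real.exp (-(1/2) * x ^ 2) ≤ 1 := by
  have h1 : x ≤ Real.exp ((1/2) * x ^ 2) := by
    nlinarith [Real.add_one_le_exp ((1/2) * x ^ 2)]
  calc x * Real.exp (-(1/2) * x ^ 2)
      ≤ Real.exp ((1/2) * x ^ 2) * Real.exp (-(1/2) * x ^ 2) :=
        mul_le_mul_of_nonneg_right h1 (Real.exp_pos _).le
    _ = 1 := by rw [← Real.exp_add]; norm_num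

lemma aux_x2exp (x : ℝ) (hx : 0 ≤ x) : x * Real.exp (-(1/2) * x) ≤ 2 := by
  have h1 : x ≤ 2 * Real.exp ((1/2) * x) := by
    nlinarith [Real.add_one_le_exp ((1/2) * x)]
  calc x * Real.exp (-(1/2) * x)
      ≤ (2 * Real.exp ((1/2) * x)) * Real.exp (-(1/2) * x) :=
        mul_le_mul_of_nonneg_right h1 (Real.exp_pos _).le
    _ = 2 := by rw [mul_assoc, ← Real.exp_add]; norm_num

section Gauss
variable {F : Type*} [NormedAddCommGroup F] [InnerProductSpace ℝ F]

/-- one-dimensional slice of the Gaussian likelihood -/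
noncomputable def gg (a b : F) (s : ℝ) : ℝ := Real.exp (-(1/2) * ‖a - s • b‖ ^ 2)

/-- its derivative -/
noncomputable def gd (a b : F) (s : ℝ) : ℝ := ⟪a - s • b, b⟫ * gg a b s

lemma gg_pos (a b : F) (s : ℝ) : 0 < gg a b s := Real.exp_pos _

lemma gg_le_one (a b : F) (s : ℝ) : gg a b s ≤ 1 := by
  rw [gg, Real.exp_le_one_iff]
  nlinarith [sq_nonneg ‖a - s • b‖]

lemma hasDerivAt_gg (a b : F) (s : ℝ) : HasDerivAt (gg a b) (gd a b s) s := by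
  have hw : HasDerivAt (fun s : ℝ => a - s • b) (-b) s := by
    simpa using ((hasDerivAt_id s).smul_const b).const_sub a
  have hq : HasDerivAt (fun s : ℝ => ⟪a - s • b, a - s • b⟫)
      (⟪a - s • b, -b⟫ + ⟪-b, a - s • b⟫) s := HasDerivAt.inner ℝ hw hw
  have hn : HasDerivAt (fun s : ℝ => ‖a - s • b‖ ^ 2)
      (⟪a - s • b, -b⟫ + ⟪-b, a - s • b⟫) s := by
    convert hq using 2 with s
    rw [← real_inner_self_eq_norm_sq]
  have := ((hn.const_mul (-(1/2) : ℝ)).exp)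
  convert this using 1
  · rfl
  rw [gd, gg]
  rw [inner_neg_right, inner_neg_left, real_inner_comm]
  ring

lemma hasDerivAt_gd (a b : F) (s : ℝ) :
    HasDerivAt (gd a b) ((-(‖b‖ ^ 2) + ⟪a - s • b, b⟫ ^ 2) * gg a b s) s := by
  have hw : HasDerivAt (fun s : ℝ => a - s • b) (-b) s := by
    simpa using ((hasDerivAt_id s).smul_const b).const_sub a
  have hi : HasDerivAt (fun s : ℝ => ⟪a - s • b, b⟫) (⟪-b, b⟫) s := by
    simpa using HasDerivAt.inner ℝ hw (hasDerivAt_const s b)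
  have := hi.mul (hasDerivAt_gg a b s)
  convert this using 1
  · rfl
  · rfl
  · rfl
  rw [gd, inner_neg_left, real_inner_self_eq_norm_sq]
  ring

lemma gd_bound (a b : F) (s : ℝ) : |gd a b s| ≤ ‖b‖ := by
  rw [gd, abs_mul, abs_of_pos (gg_pos a b s)]
  calc |⟪a - s • b, b⟫| * gg a b s ≤ (‖a - s • b‖ * ‖b‖) * gg a b s := by
        apply mul_le_mul_of_nonneg_right (abs_real_inner_le_norm _ _) (gg_pos a b s).le
    _ = ‖b‖ * (‖a - s • b‖ * gg a b s) := by ring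
    _ ≤ ‖b‖ * 1 := by
        apply mul_le_mul_of_nonneg_left _ (norm_nonneg b)
        exact aux_xexp _ (norm_nonneg _)
    _ = ‖b‖ := mul_one _

lemma gd'_bound (a b : F) (s : ℝ) :
    |(-(‖b‖ ^ 2) + ⟪a - s • b, b⟫ ^ 2) * gg a b s| ≤ 3 * ‖b‖ ^ 2 := by
  have h1 : |(-(‖b‖ ^ 2) + ⟪a - s • b, b⟫ ^ 2)| ≤ ‖b‖ ^ 2 + ⟪a - s • b, b⟫ ^ 2 := by
    rw [abs_le]; constructor <;> nlinarith [sq_nonneg ⟪a - s • b, b⟫, sq_nonneg ‖b‖]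
  rw [abs_mul, abs_of_pos (gg_pos a b s)]
  have h2 : ⟪a - s • b, b⟫ ^ 2 * gg a b s ≤ 2 * ‖b‖ ^ 2 := by
    have hle : ⟪a - s • b, b⟫ ^ 2 ≤ ‖a - s • b‖ ^ 2 * ‖b‖ ^ 2 := by
      have := abs_real_inner_le_norm (a - s • b) b
      nlinarith [abs_nonneg ⟪a - s • b, b⟫, norm_nonneg (a - s • b), norm_nonneg b,
        neg_abs_le ⟪a - s • b, b⟫, le_abs_self ⟪a - s • b, b⟫]
    calc ⟪a - s • b, b⟫ ^ 2 * gg a b s ≤ (‖a - s • b‖ ^ 2 * ‖b‖ ^ 2) * gg a b s :=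
          mul_le_mul_of_nonneg_right hle (gg_pos a b s).le
      _ = ‖b‖ ^ 2 * (‖a - s • b‖ ^ 2 * gg a b s) := by ring
      _ ≤ ‖b‖ ^ 2 * 2 := by
          apply mul_le_mul_of_nonneg_left _ (sq_nonneg _)
          have := aux_x2exp (‖a - s • b‖ ^ 2) (sq_nonneg _)
          rw [gg]; exact this
      _ = 2 * ‖b‖ ^ 2 := by ring
  have h3 : (‖b‖ ^ 2) * gg a b s ≤ ‖b‖ ^ 2 :=
    calc ‖b‖ ^ 2 * gg a b s ≤ ‖b‖ ^ 2 * 1 :=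
        mul_le_mul_of_nonneg_left (gg_le_one a b s) (sq_nonneg _)
      _ = ‖b‖ ^ 2 := mul_one _
  calc |(-(‖b‖ ^ 2) + ⟪a - s • b, b⟫ ^ 2)| * gg a b s
      ≤ (‖b‖ ^ 2 + ⟪a - s • b, b⟫ ^ 2) * gg a b s :=
        mul_le_mul_of_nonneg_right h1 (gg_pos a b s).le
    _ = ‖b‖ ^ 2 * gg a b s + ⟪a - s • b, b⟫ ^ 2 * gg a b s := by ring
    _ ≤ ‖b‖ ^ 2 + 2 * ‖b‖ ^ 2 := add_le_add h3 h2
    _ = 3 * ‖b‖ ^ 2 := by ring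

lemma gd_lip (a b : F) (t s : ℝ) : |gd a b t - gd a b s| ≤ 3 * ‖b‖ ^ 2 * |t - s| := by
  have hC : (0:ℝ) ≤ 3 * ‖b‖ ^ 2 := by positivity
  have hl : LipschitzWith (Real.toNNReal (3 * ‖b‖ ^ 2)) (gd a b) := by
    apply lipschitzWith_of_nnnorm_deriv_le (fun x => (hasDerivAt_gd a b x).differentiableAt)
    intro x
    rw [← NNReal.coe_le_coe, coe_nnnorm, Real.norm_eq_abs, Real.coe_toNNReal _ hC,
      (hasDerivAt_gd a b x).deriv]
    exact gd'_bound a b x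
  have := hl.dist_le_mul t s
  rwa [Real.dist_eq, Real.dist_eq, Real.coe_toNNReal _ hC] at this

lemma gg_taylor (a b : F) (t : ℝ) :
    |gg a b t - gg a b 0 - t * gd a b 0| ≤ 3 * ‖b‖ ^ 2 * t ^ 2 := by
  set φ : ℝ → ℝ := fun s => gg a b s - s * gd a b 0 with hφdef
  have hφ : ∀ s : ℝ, HasDerivAt φ (gd a b s - gd a b 0) s := by
    intro s
    have h2 : HasDerivAt (fun s : ℝ => s * gd a b 0) (gd a b 0) s := by
      simpa using (hasDerivAt_id s).mul_const (gd a b 0)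
    exact (hasDerivAt_gg a b s).sub h2
  have key : ‖φ t - φ 0‖ ≤ (3 * ‖b‖ ^ 2 * |t|) * ‖t - 0‖ := by
    apply Convex.norm_image_sub_le_of_norm_hasDerivWithin_le
      (f' := fun s => gd a b s - gd a b 0) (s := Set.Icc (-|t|) |t|)
      (fun x _ => (hφ x).hasDerivWithinAt) _ (convex_Icc _ _) _ _
    · intro x hx
      rw [Real.norm_eq_abs]
      have hxt : |x| ≤ |t| := abs_le.2 ⟨hx.1, hx.2⟩
      calc |gd a b x - gd a b 0| ≤ 3 * ‖b‖ ^ 2 * |x - 0| := gd_lip a b x 0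
        _ ≤ 3 * ‖b‖ ^ 2 * |t| := by
            rw [sub_zero]; exact mul_le_mul_of_nonneg_left hxt (by positivity)
    · exact ⟨neg_nonpos_of_nonneg (abs_nonneg t), abs_nonneg t⟩
    · exact ⟨neg_abs_le t, le_abs_self t⟩
  have : φ t - φ 0 = gg a b t - gg a b 0 - t * gd a b 0 := by
    simp only [hφdef]; ring
  rw [this] at key
  rw [Real.norm_eq_abs, sub_zero, Real.norm_eq_abs] at key
  calc |gg a b t - gg a b 0 - t * gd a b 0| ≤ 3 * ‖b‖ ^ 2 * |t| * |t| := key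
    _ = 3 * ‖b‖ ^ 2 * t ^ 2 := by rw [mul_assoc, abs_mul_abs_self]; ring

end Gauss


section Fomin
variable {X : Type*} [NormedAddCommGroup X] [NormedSpace ℝ X]
    [MeasurableSpace X] [BorelSpace X]

lemma measurable_shift (h : X) (t : ℝ) : Measurable (fun u : X => u - t • h) :=
  (continuous_id.sub continuous_const).measurable

lemma shift_image (h : X) (t : ℝ) (A : Set X) :
    (· + t • h) '' A = (fun u : X => u - t • h) ⁻¹' A := by
  ext u
  constructor
  · rintro ⟨a, ha, rfl⟩; simpa using ha
  · intro hu; exact ⟨u - t • h, hu, sub_add_cancel u (t • h)⟩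

variable (lam : Measure X) [IsProbabilityMeasure lam] (h : X) (βh : X → ℝ)

lemma integrable_bdd {w : X → ℝ} {c : ℝ} (hw : Measurable w) (hwc : ∀ u, |w u| ≤ c) :
    Integrable w lam := by
  apply Integrable.mono' (integrable_const c) hw.aestronglyMeasurable
  exact Eventually.of_forall (fun u => by rw [Real.norm_eq_abs]; exact hwc u)

lemma phi_hasDerivAt
    (hFomin : ∀ A : Set X, MeasurableSet A →
      Tendsto (fun t : ℝ => ((lam ((· + t • h) '' A)).toReal - (lam A).toReal) / t)
        (𝓝[≠] 0) (𝓝 (∫ u in A, βh u ∂lam)))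
    {B : Set X} (hB : MeasurableSet B) (t₀ : ℝ) :
    HasDerivAt (fun t : ℝ => (lam ((fun u : X => u - t • h) ⁻¹' B)).toReal)
      (∫ u in (fun u : X => u - t₀ • h) ⁻¹' B, βh u ∂lam) t₀ := by
  rw [hasDerivAt_iff_tendsto_slope_zero]
  have hB' : MeasurableSet ((fun u : X => u - t₀ • h) ⁻¹' B) :=
    hB.preimage (measurable_shift h t₀)
  have key := hFomin _ hB'
  apply key.congr
  intro t
  have hset : (· + t • h) '' ((fun u : X => u - t₀ • h) ⁻¹' B)
      = (fun u : X => u - (t₀ + t) • h) ⁻¹' B := by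
    rw [shift_image]
    ext u
    simp only [Set.mem_preimage]
    have : u - t • h - t₀ • h = u - (t₀ + t) • h := by rw [add_smul]; abel
    rw [this]
  rw [hset]
  simp only [smul_eq_mul, div_eq_inv_mul]

lemma phi_lipschitz (hβh : Integrable βh lam)
    (hFomin : ∀ A : Set X, MeasurableSet A →
      Tendsto (fun t : ℝ => ((lam ((· + t • h) '' A)).toReal - (lam A).toReal) / t)
        (𝓝[≠] 0) (𝓝 (∫ u in A, βh u ∂lam)))
    {B : Set X} (hB : MeasurableSet B) (t : ℝ) :
    |(lam ((fun u : X => u - t • h) ⁻¹' B)).toReal - (lam B).toReal|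
      ≤ (∫ u, |βh u| ∂lam) * |t| := by
  set L := ∫ u, |βh u| ∂lam with hLdef
  have hL : 0 ≤ L := integral_nonneg (fun u => abs_nonneg _)
  have hlip : LipschitzWith (Real.toNNReal L)
      (fun t : ℝ => (lam ((fun u : X => u - t • h) ⁻¹' B)).toReal) := by
    apply lipschitzWith_of_nnnorm_deriv_le
      (fun x => (phi_hasDerivAt lam h βh hFomin hB x).differentiableAt)
    intro x
    rw [← NNReal.coe_le_coe, coe_nnnorm, Real.norm_eq_abs, Real.coe_toNNReal _ hL,
      (phi_hasDerivAt lam h βh hFomin hB x).deriv]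
    calc |∫ u in (fun u : X => u - x • h) ⁻¹' B, βh u ∂lam|
        ≤ ∫ u in (fun u : X => u - x • h) ⁻¹' B, |βh u| ∂lam := by
          simpa [Real.norm_eq_abs] using
            norm_integral_le_integral_norm (μ := lam.restrict ((fun u : X => u - x • h) ⁻¹' B)) βh
      _ ≤ L := setIntegral_le_integral hβh.abs (Eventually.of_forall fun u => abs_nonneg _)
  have hd := hlip.dist_le_mul t 0
  simp only [Real.dist_eq, sub_zero, Real.coe_toNNReal _ hL] at hd
  have h0 : (fun u : X => u - (0:ℝ) • h) ⁻¹' B = B := by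
    ext u; simp
  rw [h0] at hd
  exact hd

lemma shift_integral_bound (hβh : Integrable βh lam)
    (hFomin : ∀ A : Set X, MeasurableSet A →
      Tendsto (fun t : ℝ => ((lam ((· + t • h) '' A)).toReal - (lam A).toReal) / t)
        (𝓝[≠] 0) (𝓝 (∫ u in A, βh u ∂lam)))
    {w : X → ℝ} (hw : Measurable w) {c : ℝ} (hc : 0 ≤ c)
    (hw0 : ∀ u, 0 ≤ w u) (hwc : ∀ u, w u ≤ c) (t : ℝ) :
    |(∫ u, w (u - t • h) ∂lam) - ∫ u, w u ∂lam| ≤ (∫ u, |βh u| ∂lam) * c * |t| := by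
  set L := ∫ u, |βh u| ∂lam with hLdef
  have hL : 0 ≤ L := integral_nonneg (fun u => abs_nonneg _)
  -- the two layer-cake integrands
  set F : ℝ → ℝ → ℝ :=
    fun τ s => (lam ((fun u : X => u - τ • h) ⁻¹' {a : X | s < w a})).toReal with hF
  have hBmeas : ∀ s : ℝ, MeasurableSet {a : X | s < w a} :=
    fun s => measurableSet_lt measurable_const hw
  have hFnonneg : ∀ τ s, 0 ≤ F τ s := fun τ s => ENNReal.toReal_nonneg
  have hFle1 : ∀ τ s, F τ s ≤ 1 := by
    intro τ s
    have h1 : lam ((fun u : X => u - τ • h) ⁻¹' {a : X | s < w a}) ≤ 1 := prob_le_one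
    exact (ENNReal.toReal_mono ENNReal.one_ne_top h1).trans_eq ENNReal.toReal_one
  have hFzero : ∀ τ s, c < s → F τ s = 0 := by
    intro τ s hs
    have : {a : X | s < w a} = ∅ := by
      ext a; simp only [Set.mem_setOf_eq, Set.mem_empty_iff_false, iff_false, not_lt]
      exact (hwc a).trans hs.le
    have h2 : (fun u : X => u - τ • h) ⁻¹' {a : X | s < w a} = (∅ : Set X) := by
      rw [this]; exact Set.preimage_empty
    show (lam ((fun u : X => u - τ • h) ⁻¹' {a : X | s < w a})).toReal = 0
    rw [h2]; simp
  -- integrability of the shifted composition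
  have hint : ∀ τ : ℝ, Integrable (fun u => w (u - τ • h)) lam := by
    intro τ
    exact integrable_bdd lam (hw.comp (measurable_shift h τ))
      (fun u => abs_le.2 ⟨by linarith [hw0 (u - τ • h)], hwc _⟩)
  -- layer cake representation
  have hlc : ∀ τ : ℝ, ∫ u, w (u - τ • h) ∂lam = ∫ s in Set.Ioi (0:ℝ), F τ s := by
    intro τ
    have := (hint τ).integral_eq_integral_meas_lt (Eventually.of_forall (fun u => hw0 _))
    rw [this]; rfl
  have hlc0 : ∫ u, w u ∂lam = ∫ s in Set.Ioi (0:ℝ), F 0 s := by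
    have hb := (integrable_bdd lam hw (fun u => abs_le.2 ⟨by linarith [hw0 u], hwc u⟩))
    have := hb.integral_eq_integral_meas_lt (Eventually.of_forall (fun u => hw0 _))
    rw [this]
    apply integral_congr_ae
    apply Eventually.of_forall
    intro s
    have h0 : (fun u : X => u - (0:ℝ) • h) ⁻¹' {a : X | s < w a} = {a : X | s < w a} := by
      ext u; simp
    show (lam {a : X | s < w a}).toReal
      = (lam ((fun u : X => u - (0:ℝ) • h) ⁻¹' {a : X | s < w a})).toReal
    rw [h0]
  -- measurability and integrability of F τ on Ioi 0
  have hFmeas : ∀ τ : ℝ, Measurable (F τ) := by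
    intro τ
    apply Antitone.measurable
    intro s s' hss'
    apply ENNReal.toReal_mono (measure_ne_top _ _)
    apply measure_mono
    intro u hu
    exact lt_of_le_of_lt hss' hu
  have hg1int : Integrable ((Set.Ioc (0:ℝ) c).indicator (fun _ => (1:ℝ)))
      (volume.restrict (Set.Ioi (0:ℝ))) := by
    rw [integrable_indicator_iff measurableSet_Ioc]
    exact integrableOn_const (lt_of_le_of_lt (Measure.restrict_apply_le _ _)
      measure_Ioc_lt_top).ne
  have hFint : ∀ τ : ℝ, Integrable (F τ) (volume.restrict (Set.Ioi (0:ℝ))) := by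
    intro τ
    apply Integrable.mono' hg1int (hFmeas τ).aestronglyMeasurable
    rw [ae_restrict_iff' measurableSet_Ioi]
    apply Eventually.of_forall
    intro s hs
    rw [Real.norm_eq_abs, abs_of_nonneg (hFnonneg τ s)]
    by_cases hsc : s ≤ c
    · rw [Set.indicator_of_mem (Set.mem_Ioc.2 ⟨Set.mem_Ioi.1 hs, hsc⟩)]
      exact hFle1 τ s
    · rw [Set.indicator_of_notMem (fun hmem => hsc (Set.mem_Ioc.1 hmem).2),
        hFzero τ s (not_le.1 hsc)]
  -- pointwise bound
  have hptw : ∀ s ∈ Set.Ioi (0:ℝ),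
      |F t s - F 0 s| ≤ (Set.Ioc (0:ℝ) c).indicator (fun _ => L * |t|) s := by
    intro s hs
    by_cases hsc : s ≤ c
    · rw [Set.indicator_of_mem (Set.mem_Ioc.2 ⟨Set.mem_Ioi.1 hs, hsc⟩)]
      have key := phi_lipschitz lam h βh hβh hFomin (hBmeas s) t
      show |(lam ((fun u : X => u - t • h) ⁻¹' {a : X | s < w a})).toReal
        - (lam ((fun u : X => u - (0:ℝ) • h) ⁻¹' {a : X | s < w a})).toReal| ≤ L * |t|
      have h0 : (fun u : X => u - (0:ℝ) • h) ⁻¹' {a : X | s < w a} = {a : X | s < w a} := by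
        ext u; simp
      rw [h0]
      exact key
    · rw [Set.indicator_of_notMem (fun hmem => hsc (Set.mem_Ioc.1 hmem).2),
        hFzero t s (not_le.1 hsc), hFzero 0 s (not_le.1 hsc)]
      simp
  -- indicator integral value
  have hindint : Integrable ((Set.Ioc (0:ℝ) c).indicator (fun _ => L * |t|))
      (volume.restrict (Set.Ioi (0:ℝ))) := by
    rw [integrable_indicator_iff measurableSet_Ioc]
    exact integrableOn_const (lt_of_le_of_lt (Measure.restrict_apply_le _ _)
      measure_Ioc_lt_top).ne
  have hindval : ∫ s in Set.Ioi (0:ℝ), (Set.Ioc (0:ℝ) c).indicator (fun _ => L * |t|) s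
      = L * c * |t| := by
    rw [integral_indicator measurableSet_Ioc]
    rw [Measure.restrict_restrict measurableSet_Ioc]
    rw [Set.inter_eq_self_of_subset_left Set.Ioc_subset_Ioi_self]
    rw [setIntegral_const]
    simp [Real.volume_Ioc, ENNReal.toReal_ofReal hc]
    rw [max_eq_left hc]; ring
  -- put things together
  rw [hlc t, hlc0]
  rw [← integral_sub (hFint t) (hFint 0)]
  calc |∫ s in Set.Ioi (0:ℝ), (F t s - F 0 s)|
      ≤ ∫ s in Set.Ioi (0:ℝ), |F t s - F 0 s| := by
        simpa [Real.norm_eq_abs] using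
          norm_integral_le_integral_norm (μ := volume.restrict (Set.Ioi (0:ℝ)))
            (fun s => F t s - F 0 s)
    _ ≤ ∫ s in Set.Ioi (0:ℝ), (Set.Ioc (0:ℝ) c).indicator (fun _ => L * |t|) s := by
        apply integral_mono_ae ((hFint t).sub (hFint 0)).abs hindint
        have : ∀ᵐ s ∂(volume.restrict (Set.Ioi (0:ℝ))),
            |F t s - F 0 s| ≤ (Set.Ioc (0:ℝ) c).indicator (fun _ => L * |t|) s := by
          rw [ae_restrict_iff' measurableSet_Ioi]
          exact Eventually.of_forall hptw
        exact this
    _ = L * c * |t| := hindval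

lemma shift_integral_bound' (hβh : Integrable βh lam)
    (hFomin : ∀ A : Set X, MeasurableSet A →
      Tendsto (fun t : ℝ => ((lam ((· + t • h) '' A)).toReal - (lam A).toReal) / t)
        (𝓝[≠] 0) (𝓝 (∫ u in A, βh u ∂lam)))
    {w : X → ℝ} (hw : Measurable w) {c : ℝ} (hwc : ∀ u, |w u| ≤ c) (t : ℝ) :
    |(∫ u, w (u - t • h) ∂lam) - ∫ u, w u ∂lam| ≤ (∫ u, |βh u| ∂lam) * (2 * c) * |t| := by
  have hc : 0 ≤ c := le_trans (abs_nonneg _) (hwc (0 : X))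
  have hw' : Measurable (fun u => w u + c) := hw.add_const c
  have h0 : ∀ u, 0 ≤ w u + c := fun u => by linarith [neg_abs_le (w u), hwc u]
  have h1 : ∀ u, w u + c ≤ 2 * c := fun u => by linarith [le_abs_self (w u), hwc u]
  have key := shift_integral_bound lam h βh hβh hFomin hw' (by linarith) h0 h1 t
  have hi : Integrable (fun u : X => w (u - t • h)) lam := by
    exact integrable_bdd lam (hw.comp (measurable_shift h t)) (fun u => hwc _)
  have e1 : ∫ u, (w (u - t • h) + c) ∂lam = (∫ u, w (u - t • h) ∂lam) + c := by
    rw [integral_add hi (integrable_const c)]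
    simp [measure_univ]
  have e0 : ∫ u, (w u + c) ∂lam = (∫ u, w u ∂lam) + c := by
    rw [integral_add (integrable_bdd lam hw hwc) (integrable_const c)]
    simp [measure_univ]
  rw [e1, e0] at key
  simpa using key

lemma weighted_fomin (hβh : Integrable βh lam)
    (hFomin : ∀ A : Set X, MeasurableSet A →
      Tendsto (fun t : ℝ => ((lam ((· + t • h) '' A)).toReal - (lam A).toReal) / t)
        (𝓝[≠] 0) (𝓝 (∫ u in A, βh u ∂lam)))
    {g : X → ℝ} (hg : Measurable g) (hg0 : ∀ u, 0 ≤ g u) (hg1 : ∀ u, g u ≤ 1) :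
    Tendsto (fun t : ℝ => ((∫ u, g (u - t • h) ∂lam) - ∫ u, g u ∂lam) / t) (𝓝[≠] 0)
      (𝓝 (∫ u, g u * βh u ∂lam)) := by
  classical
  rw [Metric.tendsto_nhds]
  intro ε hε
  set L := ∫ u, |βh u| ∂lam with hLdef
  have hL : 0 ≤ L := integral_nonneg (fun u => abs_nonneg _)
  -- choose n
  set n : ℕ := ⌊3 * L / ε⌋₊ + 1 with hndef
  have hnpos : (0:ℝ) < n := by positivity
  have hLn : L / n < ε / 3 := by
    have h3 : 3 * L / ε < n := by
      calc 3 * L / ε < ⌊3 * L / ε⌋₊ + 1 := Nat.lt_floor_add_one _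
        _ = (n : ℝ) := by rw [hndef]; push_cast; ring
    rw [div_lt_div_iff₀ hnpos (by norm_num : (0:ℝ) < 3)]
    rw [div_lt_iff₀ hε] at h3
    nlinarith
  -- the approximating simple function
  set E : ℕ → Set X := fun k => g ⁻¹' (Set.Ici (((k:ℝ) + 1) / n)) with hEdef
  have hEmeas : ∀ k, MeasurableSet (E k) := fun k => hg measurableSet_Ici
  set sg : X → ℝ := fun u => ∑ k ∈ Finset.range n, (n:ℝ)⁻¹ * (E k).indicator 1 u with hsgdef
  have hsg_meas : Measurable sg := by
    apply Finset.measurable_sum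
    intro k _
    exact (measurable_const.indicator (hEmeas k)).const_mul _
  -- closed form
  have hsg_eq : ∀ u, sg u = (⌊(n:ℝ) * g u⌋₊ : ℝ) / n := by
    intro u
    have hfil : (Finset.range n).filter (fun k : ℕ => ((k:ℝ) + 1) / n ≤ g u)
        = Finset.range (Nat.floor ((n:ℝ) * g u)) := by
      ext k
      simp only [Finset.mem_filter, Finset.mem_range]
      constructor
      · rintro ⟨hkn, hk⟩
        rw [div_le_iff₀ hnpos] at hk
        have : ((k + 1 : ℕ) : ℝ) ≤ (n:ℝ) * g u := by
          rw [Nat.cast_add, Nat.cast_one]; linarith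
        have := Nat.le_floor this
        omega
      · intro hk
        have hfl : (⌊(n:ℝ) * g u⌋₊ : ℝ) ≤ (n:ℝ) * g u :=
          Nat.floor_le (mul_nonneg hnpos.le (hg0 u))
        have hkk : ((k:ℝ) + 1) ≤ (⌊(n:ℝ) * g u⌋₊ : ℝ) := by
          have : (k + 1 : ℕ) ≤ ⌊(n:ℝ) * g u⌋₊ := hk
          exact_mod_cast this
        have hfn : ⌊(n:ℝ) * g u⌋₊ ≤ n := by
          have : (n:ℝ) * g u ≤ (n:ℝ) := by nlinarith [hg1 u]
          calc ⌊(n:ℝ) * g u⌋₊ ≤ ⌊(n:ℝ)⌋₊ := Nat.floor_mono this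
            _ = n := Nat.floor_natCast n
        constructor
        · omega
        · rw [div_le_iff₀ hnpos]; linarith
    have : sg u = ∑ k ∈ Finset.range n,
        (if ((k:ℝ) + 1) / n ≤ g u then (n:ℝ)⁻¹ else 0) := by
      rw [hsgdef]
      apply Finset.sum_congr rfl
      intro k _
      rw [Set.indicator_apply]
      by_cases hm : u ∈ E k
      · rw [if_pos hm, if_pos (by simpa [hEdef] using hm)]; simp
      · rw [if_neg hm, if_neg (by simpa [hEdef] using hm)]; simp
    rw [this, Finset.sum_ite, Finset.sum_const, Finset.sum_const_zero, add_zero, hfil,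
      Finset.card_range]
    rw [nsmul_eq_mul, div_eq_mul_inv]
  have hsg_le : ∀ u, sg u ≤ g u := by
    intro u
    rw [hsg_eq u, div_le_iff₀ hnpos]
    calc (⌊(n:ℝ) * g u⌋₊ : ℝ) ≤ (n:ℝ) * g u := Nat.floor_le (mul_nonneg hnpos.le (hg0 u))
      _ = g u * n := by ring
  have hsg_ge : ∀ u, g u - sg u ≤ 1 / n := by
    intro u
    rw [hsg_eq u]
    have := Nat.lt_floor_add_one ((n:ℝ) * g u)
    rw [sub_le_iff_le_add, ← add_div, le_div_iff₀ hnpos]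
    linarith
  have hsg0 : ∀ u, 0 ≤ sg u := fun u => by
    rw [hsg_eq]; positivity
  -- the simple part quotient
  set Sq : ℝ → ℝ := fun τ => ∑ k ∈ Finset.range n,
    (n:ℝ)⁻¹ * (lam ((fun u : X => u - τ • h) ⁻¹' E k)).toReal with hSqdef
  have hIs : ∀ τ : ℝ, ∫ u, sg (u - τ • h) ∂lam = Sq τ := by
    intro τ
    have hrw : (fun u : X => sg (u - τ • h)) = fun u => ∑ k ∈ Finset.range n,
        (n:ℝ)⁻¹ * ((fun u : X => u - τ • h) ⁻¹' E k).indicator 1 u := by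
      funext u
      rw [hsgdef]
      apply Finset.sum_congr rfl
      intro k _
      congr 1
    rw [hrw, integral_finset_sum]
    · apply Finset.sum_congr rfl
      intro k _
      rw [integral_const_mul,
        integral_indicator_one ((hEmeas k).preimage (measurable_shift h τ)), measureReal_def]
    · intro k _
      exact ((integrable_indicator_iff ((hEmeas k).preimage (measurable_shift h τ))).2
        (integrableOn_const (measure_lt_top _ _).ne)).const_mul _
  have h00 : ∫ u, sg (u - (0:ℝ) • h) ∂lam = ∫ u, sg u ∂lam := by
    simp
  have hSq0 : Sq 0 = ∫ u, sg u ∂lam := by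
    rw [← hIs 0, h00]
  -- limit of the simple part
  set Ds : ℝ := ∑ k ∈ Finset.range n, (n:ℝ)⁻¹ * ∫ u in E k, βh u ∂lam with hDsdef
  have hSq_tendsto : Tendsto (fun t : ℝ => (Sq t - Sq 0) / t) (𝓝[≠] 0) (𝓝 Ds) := by
    have hfun : ∀ t : ℝ, (Sq t - Sq 0) / t = ∑ k ∈ Finset.range n,
        (n:ℝ)⁻¹ * (((lam ((fun u : X => u - t • h) ⁻¹' E k)).toReal
          - (lam ((fun u : X => u - (0:ℝ) • h) ⁻¹' E k)).toReal) / t) := by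
      intro t
      rw [hSqdef]
      rw [← Finset.sum_sub_distrib, Finset.sum_div]
      apply Finset.sum_congr rfl
      intro k _
      ring
    have h0E : ∀ k, (fun u : X => u - (0:ℝ) • h) ⁻¹' E k = E k := by
      intro k; ext u; simp
    have : Tendsto (fun t : ℝ => ∑ k ∈ Finset.range n,
        (n:ℝ)⁻¹ * (((lam ((fun u : X => u - t • h) ⁻¹' E k)).toReal
          - (lam ((fun u : X => u - (0:ℝ) • h) ⁻¹' E k)).toReal) / t)) (𝓝[≠] 0) (𝓝 Ds) := by
      rw [hDsdef]
      apply tendsto_finset_sum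
      intro k _
      have hd := (phi_hasDerivAt lam h βh hFomin (hEmeas k) 0).tendsto_slope_zero
      rw [show (fun u : X => u - (0:ℝ) • h) ⁻¹' E k = E k from h0E k] at hd
      have hd2 := hd.const_mul ((n:ℝ)⁻¹)
      apply hd2.congr
      intro t
      simp only [zero_add, smul_eq_mul, h0E k]
      ring
    exact this.congr (fun t => (hfun t).symm)
  -- Ds equals the integral of sg * βh
  have hDs_eq : Ds = ∫ u, sg u * βh u ∂lam := by
    have hptv : ∀ u, sg u * βh u = ∑ k ∈ Finset.range n,
        (n:ℝ)⁻¹ * (E k).indicator βh u := by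
      intro u
      rw [hsgdef]
      rw [Finset.sum_mul]
      apply Finset.sum_congr rfl
      intro k _
      rw [Set.indicator_apply, Set.indicator_apply]
      by_cases hm : u ∈ E k
      · rw [if_pos hm, if_pos hm]; simp
      · rw [if_neg hm, if_neg hm]; simp
    rw [show (fun u => sg u * βh u) = fun u => ∑ k ∈ Finset.range n,
        (n:ℝ)⁻¹ * (E k).indicator βh u from funext hptv]
    rw [integral_finset_sum _ (fun k _ => (hβh.indicator (hEmeas k)).const_mul _)]
    rw [hDsdef]
    apply Finset.sum_congr rfl
    intro k _
    rw [integral_const_mul, integral_indicator (hEmeas k)]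
  -- integrability facts
  have hg_int : ∀ τ : ℝ, Integrable (fun u => g (u - τ • h)) lam := fun τ =>
    integrable_bdd lam (hg.comp (measurable_shift h τ))
      (fun u => abs_le.2 ⟨by linarith [hg0 (u - τ • h)], hg1 _⟩)
  have hsg_int : ∀ τ : ℝ, Integrable (fun u => sg (u - τ • h)) lam := fun τ =>
    integrable_bdd lam (hsg_meas.comp (measurable_shift h τ))
      (fun u => abs_le.2 ⟨by linarith [hsg0 (u - τ • h)],
        le_trans (hsg_le _) (hg1 _)⟩)
  have hg_int0 : Integrable g lam :=
    integrable_bdd lam hg (fun u => abs_le.2 ⟨by linarith [hg0 u], hg1 u⟩)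
  have hsg_int0 : Integrable sg lam :=
    integrable_bdd lam hsg_meas
      (fun u => abs_le.2 ⟨by linarith [hsg0 u], le_trans (hsg_le u) (hg1 u)⟩)
  have hgβ_int : Integrable (fun u => g u * βh u) lam := by
    apply Integrable.bdd_mul hβh hg.aestronglyMeasurable
    exact Eventually.of_forall (fun u => by rw [Real.norm_eq_abs, abs_of_nonneg (hg0 u)]; exact hg1 u)
  have hsgβ_int : Integrable (fun u => sg u * βh u) lam := by
    apply Integrable.bdd_mul hβh hsg_meas.aestronglyMeasurable
    exact Eventually.of_forall (fun u => by
      rw [Real.norm_eq_abs, abs_of_nonneg (hsg0 u)]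
      exact le_trans (hsg_le u) (hg1 u))
  -- |Ds - target| ≤ L / n
  have hDscl : |Ds - ∫ u, g u * βh u ∂lam| ≤ L / n := by
    rw [hDs_eq, ← integral_sub hsgβ_int hgβ_int]
    calc |∫ u, (sg u * βh u - g u * βh u) ∂lam|
        ≤ ∫ u, |sg u * βh u - g u * βh u| ∂lam := by
          simpa [Real.norm_eq_abs] using
            norm_integral_le_integral_norm (μ := lam) (fun u => sg u * βh u - g u * βh u)
      _ ≤ ∫ u, (n:ℝ)⁻¹ * |βh u| ∂lam := by
          apply integral_mono ((hsgβ_int.sub hgβ_int).abs) (hβh.abs.const_mul _)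
          intro u
          simp only [Pi.sub_apply]
          have : sg u * βh u - g u * βh u = (sg u - g u) * βh u := by ring
          rw [this, abs_mul]
          apply mul_le_mul_of_nonneg_right _ (abs_nonneg _)
          rw [abs_le]
          constructor
          · have := hsg_ge u; have := hsg_le u
            rw [neg_le, neg_sub]
            calc g u - sg u ≤ 1 / n := hsg_ge u
              _ = (n:ℝ)⁻¹ := one_div _
          · linarith [hsg_le u, show (0:ℝ) ≤ (n:ℝ)⁻¹ by positivity]
      _ = (n:ℝ)⁻¹ * L := by rw [integral_const_mul]
      _ = L / n := by rw [div_eq_mul_inv]; ring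
  -- shift bound for g - sg
  have hw_bound := fun t : ℝ => shift_integral_bound lam h βh hβh hFomin
    (hg.sub hsg_meas) (c := 1/n) (by positivity)
    (fun u => by simp only [Pi.sub_apply]; linarith [hsg_le u])
    (fun u => hsg_ge u) t
  have e_t : ∀ τ : ℝ, ∫ u, (g (u - τ • h) - sg (u - τ • h)) ∂lam
      = (∫ u, g (u - τ • h) ∂lam) - ∫ u, sg (u - τ • h) ∂lam := by
    intro τ
    exact integral_sub (hg_int τ) (hsg_int τ)
  have e_0 : ∫ u, (g u - sg u) ∂lam = (∫ u, g u ∂lam) - ∫ u, sg u ∂lam :=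
    integral_sub hg_int0 hsg_int0
  -- final assembly
  have h2 := Metric.tendsto_nhds.mp hSq_tendsto (ε/3) (by linarith)
  filter_upwards [h2, self_mem_nhdsWithin] with t h2t hne
  have ht : t ≠ 0 := hne
  rw [Real.dist_eq] at h2t ⊢
  have hb1 : |((∫ u, g (u - t • h) ∂lam) - ∫ u, g u ∂lam) / t - (Sq t - Sq 0) / t|
      ≤ L / n := by
    have heq : ((∫ u, g (u - t • h) ∂lam) - ∫ u, g u ∂lam) / t - (Sq t - Sq 0) / t
        = ((∫ u, (g (u - t • h) - sg (u - t • h)) ∂lam) - ∫ u, (g u - sg u) ∂lam) / t := by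
      rw [e_t t, e_0, ← hIs t, hSq0]
      ring
    rw [heq, abs_div, div_le_iff₀ (abs_pos.2 ht)]
    exact (hw_bound t).trans (le_of_eq (by rw [one_div]; ring))
  have tri : |((∫ u, g (u - t • h) ∂lam) - ∫ u, g u ∂lam) / t - ∫ u, g u * βh u ∂lam|
      ≤ |((∫ u, g (u - t • h) ∂lam) - ∫ u, g u ∂lam) / t - (Sq t - Sq 0) / t|
        + |(Sq t - Sq 0) / t - Ds| + |Ds - ∫ u, g u * βh u ∂lam| := by
    have : ((∫ u, g (u - t • h) ∂lam) - ∫ u, g u ∂lam) / t - ∫ u, g u * βh u ∂lam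
        = (((∫ u, g (u - t • h) ∂lam) - ∫ u, g u ∂lam) / t - (Sq t - Sq 0) / t)
          + (((Sq t - Sq 0) / t - Ds) + (Ds - ∫ u, g u * βh u ∂lam)) := by ring
    have tri2 := abs_add_le ((Sq t - Sq 0) / t - Ds) (Ds - ∫ u, g u * βh u ∂lam)
    rw [this]
    exact (abs_add_le _ _).trans (by linarith)
  linarith

end Fomin



/-- Theorem 4.2 (first part): the posterior obtained from a Fomin-differentiable prior
and a Gaussian likelihood is Fomin differentiable, with logarithmic derivative
`β^μ_h(u) = β^λ_h(u) − ⟨A u − m, A h⟩`. -/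
theorem stmt6 {X : Type*} [NormedAddCommGroup X] [NormedSpace ℝ X] [CompleteSpace X]
    [TopologicalSpace.SeparableSpace X] [MeasurableSpace X] [BorelSpace X]
    {M : ℕ} (lam : Measure X) [IsProbabilityMeasure lam]
    (h : X) (βh : X → ℝ) (hβh : Integrable βh lam)
    (hFomin : ∀ A : Set X, MeasurableSet A →
      Tendsto (fun t : ℝ => ((lam ((· + t • h) '' A)).toReal - (lam A).toReal) / t)
        (𝓝[≠] 0) (𝓝 (∫ u in A, βh u ∂lam)))
    (Aop : X →L[ℝ] EuclideanSpace ℝ (Fin M)) (m : EuclideanSpace ℝ (Fin M))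
    (f : X → ℝ) (hf : f = fun u => Real.exp (-(1/2) * ‖Aop u - m‖ ^ 2))
    (G : ℝ) (hG : G = ∫ u, f u ∂lam)
    (μ : Measure X) (hμ : μ = lam.withDensity (fun u => ENNReal.ofReal (G⁻¹ * f u))) :
    ∀ A : Set X, MeasurableSet A →
      Tendsto (fun t : ℝ => ((μ ((· + t • h) '' A)).toReal - (μ A).toReal) / t)
        (𝓝[≠] 0)
        (𝓝 (∫ u in A, (βh u - ⟪Aop u - m, Aop h⟫) ∂μ)) := by
  classical
  intro A hA
  -- basic facts about f
  have hfc : Continuous f := by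
    rw [hf]
    exact Real.continuous_exp.comp
      (continuous_const.mul (((Aop.continuous.sub continuous_const).norm).pow 2))
  have hfmeas : Measurable f := hfc.measurable
  have hf_pos : ∀ u, 0 < f u := fun u => by rw [hf]; exact Real.exp_pos _
  have hf_le1 : ∀ u, f u ≤ 1 := fun u => by
    rw [hf]
    simp only []
    rw [Real.exp_le_one_iff]
    nlinarith [sq_nonneg ‖Aop u - m‖]
  have hf_int : Integrable f lam :=
    integrable_bdd lam hfmeas (fun u => abs_le.2 ⟨by linarith [hf_pos u], hf_le1 u⟩)
  -- positivity of the normalization constant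
  have hG_pos : 0 < G := by
    rw [hG]
    rw [integral_pos_iff_support_of_nonneg (fun u => (hf_pos u).le) hf_int]
    have hsupp : Function.support f = Set.univ :=
      Set.eq_univ_of_forall (fun u => (hf_pos u).ne')
    rw [hsupp]
    simp
  have hGinv : 0 ≤ G⁻¹ := inv_nonneg.2 hG_pos.le
  -- μ of a measurable set
  have hμS : ∀ S : Set X, MeasurableSet S →
      (μ S).toReal = G⁻¹ * ∫ u, S.indicator f u ∂lam := by
    intro S hS
    rw [hμ, withDensity_apply _ hS]
    have hint : Integrable (fun u => G⁻¹ * f u) (lam.restrict S) :=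
      (hf_int.const_mul G⁻¹).restrict
    rw [← ofReal_integral_eq_lintegral_ofReal hint
      (Eventually.of_forall (fun u => mul_nonneg hGinv (hf_pos u).le))]
    rw [ENNReal.toReal_ofReal
      (integral_nonneg (fun u => mul_nonneg hGinv (hf_pos u).le))]
    rw [integral_const_mul, integral_indicator hS]
  -- the directional derivative of f
  set df : X → ℝ := fun u => -(⟪Aop u - m, Aop h⟫) * f u with hdf
  have hAops : ∀ (u : X) (t : ℝ), Aop (u - t • h) - m = (Aop u - m) - t • (Aop h) := by
    intro u t
    rw [map_sub, Aop.map_smul, sub_right_comm]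
  have hfgg : ∀ (u : X) (t : ℝ), f (u - t • h) = gg (Aop u - m) (Aop h) t := by
    intro u t
    rw [hf, gg]
    simp only []
    rw [hAops u t]
  have hfgg0 : ∀ u : X, f u = gg (Aop u - m) (Aop h) 0 := by
    intro u
    rw [hf, gg]
    simp
  have hdfgg : ∀ (u : X) (t : ℝ), df (u - t • h) = -(gd (Aop u - m) (Aop h) t) := by
    intro u t
    rw [hdf]
    simp only []
    rw [gd, hAops u t, hfgg u t]
    ring
  have hdfgg0 : ∀ u : X, df u = -(gd (Aop u - m) (Aop h) 0) := by
    intro u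
    rw [hdf]
    simp only []
    rw [gd, hfgg0 u]
    simp
  set C1 : ℝ := 3 * ‖Aop h‖ ^ 2 with hC1
  have hC1nn : 0 ≤ C1 := by positivity
  have hTaylor : ∀ (u : X) (t : ℝ), |f u - f (u - t • h) - t * df u| ≤ C1 * t ^ 2 := by
    intro u t
    have key := gg_taylor (Aop u - m) (Aop h) t
    rw [hfgg u t, hfgg0 u, hdfgg0 u]
    rw [show gg (Aop u - m) (Aop h) 0 - gg (Aop u - m) (Aop h) t
        - t * -(gd (Aop u - m) (Aop h) 0)
        = -(gg (Aop u - m) (Aop h) t - gg (Aop u - m) (Aop h) 0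
          - t * gd (Aop u - m) (Aop h) 0) from by ring, abs_neg]
    exact key
  have hdfLip : ∀ (u : X) (t : ℝ), |df u - df (u - t • h)| ≤ C1 * |t| := by
    intro u t
    rw [hdfgg0 u, hdfgg u t]
    rw [show -(gd (Aop u - m) (Aop h) 0) - -(gd (Aop u - m) (Aop h) t)
        = gd (Aop u - m) (Aop h) t - gd (Aop u - m) (Aop h) 0 from by ring]
    simpa using gd_lip (Aop u - m) (Aop h) t 0
  have hdf_bd : ∀ u, |df u| ≤ ‖Aop h‖ := fun u => by
    rw [hdfgg0 u, abs_neg]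
    exact gd_bound _ _ 0
  have hdf_cont : Continuous df := by
    rw [hdf]
    exact ((Aop.continuous.sub continuous_const).inner continuous_const).neg.mul hfc
  have hdf_meas : Measurable df := hdf_cont.measurable
  set L := ∫ u, |βh u| ∂lam with hLd
  have hLnn : 0 ≤ L := integral_nonneg (fun u => abs_nonneg _)
  -- the indicator components
  have hg₀meas : Measurable (A.indicator f) := hfmeas.indicator hA
  have hg₀0 : ∀ u, 0 ≤ A.indicator f u :=
    fun u => Set.indicator_nonneg (fun v _ => (hf_pos v).le) u
  have hg₀1 : ∀ u, A.indicator f u ≤ 1 := by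
    intro u
    rw [Set.indicator_apply]
    by_cases hm : u ∈ A
    · rw [if_pos hm]; exact hf_le1 u
    · rw [if_neg hm]; norm_num
  have hd₀meas : Measurable (A.indicator df) := hdf_meas.indicator hA
  have hd₀bd : ∀ u, |A.indicator df u| ≤ ‖Aop h‖ := by
    intro u
    rw [Set.indicator_apply]
    by_cases hm : u ∈ A
    · rw [if_pos hm]; exact hdf_bd u
    · rw [if_neg hm]; simp [norm_nonneg]
  -- the two parts of the limit
  set D1 : ℝ := ∫ u, A.indicator f u * βh u ∂lam with hD1
  set D2 : ℝ := ∫ u, A.indicator df u ∂lam with hD2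
  have hlim1 : Tendsto
      (fun t : ℝ => ((∫ u, A.indicator f (u - t • h) ∂lam) - ∫ u, A.indicator f u ∂lam) / t)
      (𝓝[≠] 0) (𝓝 D1) :=
    weighted_fomin lam h βh hβh hFomin hg₀meas hg₀0 hg₀1
  -- the remainder term
  set R : ℝ → ℝ := fun t =>
    ∫ u, A.indicator (fun _ => (1:ℝ)) (u - t • h) * (f u - f (u - t • h)) ∂lam with hRd
  set K2 : ℝ := 2 * C1 + L * (2 * ‖Aop h‖) with hK2
  have hRb : ∀ t : ℝ, t ≠ 0 → |R t / t - D2| ≤ K2 * |t| := by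
    intro t ht
    have habs : (0:ℝ) < |t| := abs_pos.2 ht
    have hnum_bd : ∀ u : X,
        |A.indicator (fun _ => (1:ℝ)) (u - t • h) * (f u - f (u - t • h))| ≤ 2 := by
      intro u
      have h1 : |A.indicator (fun _ => (1:ℝ)) (u - t • h)| ≤ 1 := by
        rw [Set.indicator_apply]
        by_cases hm : u - t • h ∈ A
        · rw [if_pos hm]; norm_num
        · rw [if_neg hm]; norm_num
      have h2 : |f u - f (u - t • h)| ≤ 2 := by
        rw [abs_le]
        constructor
        · nlinarith [hf_pos u, hf_le1 (u - t • h)]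
        · nlinarith [hf_le1 u, hf_pos (u - t • h)]
      calc |A.indicator (fun _ => (1:ℝ)) (u - t • h) * (f u - f (u - t • h))|
          = |A.indicator (fun _ => (1:ℝ)) (u - t • h)| * |f u - f (u - t • h)| := abs_mul _ _
        _ ≤ 1 * 2 := mul_le_mul h1 h2 (abs_nonneg _) zero_le_one
        _ = 2 := by norm_num
    have hXmeas : Measurable (fun u : X =>
        (A.indicator (fun _ => (1:ℝ)) (u - t • h) * (f u - f (u - t • h))) / t) := by
      apply Measurable.div_const
      apply Measurable.mul
      · exact (measurable_const.indicator hA).comp (measurable_shift h t)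
      · exact hfmeas.sub (hfmeas.comp (measurable_shift h t))
    have hXbd : ∀ u : X,
        |(A.indicator (fun _ => (1:ℝ)) (u - t • h) * (f u - f (u - t • h))) / t|
          ≤ 2 / |t| := by
      intro u
      rw [abs_div, div_le_div_iff₀ habs habs]
      exact mul_le_mul_of_nonneg_right (hnum_bd u) habs.le
    have hXint : Integrable (fun u : X =>
        (A.indicator (fun _ => (1:ℝ)) (u - t • h) * (f u - f (u - t • h))) / t) lam :=
      integrable_bdd lam hXmeas hXbd
    have hYint : Integrable (fun u : X => A.indicator df (u - t • h)) lam := by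
      exact integrable_bdd lam (hd₀meas.comp (measurable_shift h t)) (fun u => hd₀bd _)
    have hq : ∀ u : X, |(f u - f (u - t • h)) / t - df (u - t • h)| ≤ 2 * C1 * |t| := by
      intro u
      have e1 : (f u - f (u - t • h)) / t - df (u - t • h)
          = (f u - f (u - t • h) - t * df u) / t + (df u - df (u - t • h)) := by
        field_simp
        ring
      rw [e1]
      have hh1 : |(f u - f (u - t • h) - t * df u) / t| ≤ C1 * |t| := by
        rw [abs_div, div_le_iff₀ habs]
        calc |f u - f (u - t • h) - t * df u| ≤ C1 * t ^ 2 := hTaylor u t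
          _ = C1 * |t| * |t| := by conv_rhs => rw [mul_assoc, abs_mul_abs_self t, ← pow_two]
      calc |(f u - f (u - t • h) - t * df u) / t + (df u - df (u - t • h))|
          ≤ |(f u - f (u - t • h) - t * df u) / t| + |df u - df (u - t • h)| := abs_add_le _ _
        _ ≤ C1 * |t| + C1 * |t| := add_le_add hh1 (hdfLip u t)
        _ = 2 * C1 * |t| := by ring
    have hptw : ∀ u : X,
        |(A.indicator (fun _ => (1:ℝ)) (u - t • h) * (f u - f (u - t • h))) / t
          - A.indicator df (u - t • h)| ≤ 2 * C1 * |t| := by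
      intro u
      rw [Set.indicator_apply, Set.indicator_apply]
      by_cases hm : u - t • h ∈ A
      · rw [if_pos hm, if_pos hm, one_mul]
        exact hq u
      · rw [if_neg hm, if_neg hm]
        simp only [zero_mul, zero_div, sub_zero, abs_zero]
        positivity
    have hstepA :
        |(∫ u, (A.indicator (fun _ => (1:ℝ)) (u - t • h) * (f u - f (u - t • h))) / t ∂lam)
          - ∫ u, A.indicator df (u - t • h) ∂lam| ≤ 2 * C1 * |t| := by
      rw [← integral_sub hXint hYint]
      calc |∫ u, ((A.indicator (fun _ => (1:ℝ)) (u - t • h) * (f u - f (u - t • h))) / t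
            - A.indicator df (u - t • h)) ∂lam|
          ≤ ∫ u, |(A.indicator (fun _ => (1:ℝ)) (u - t • h) * (f u - f (u - t • h))) / t
            - A.indicator df (u - t • h)| ∂lam := by
            simpa [Real.norm_eq_abs] using norm_integral_le_integral_norm (μ := lam)
              (fun u => (A.indicator (fun _ => (1:ℝ)) (u - t • h) * (f u - f (u - t • h))) / t
                - A.indicator df (u - t • h))
        _ ≤ ∫ _u : X, (2 * C1 * |t|) ∂lam :=
            integral_mono ((hXint.sub hYint).abs) (integrable_const _) hptw
        _ = 2 * C1 * |t| := by simp [measure_univ]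
    have hstepB := shift_integral_bound' lam h βh hβh hFomin hd₀meas hd₀bd t
    rw [← hD2, ← hLd] at hstepB
    have hRt : R t / t = ∫ u,
        (A.indicator (fun _ => (1:ℝ)) (u - t • h) * (f u - f (u - t • h))) / t ∂lam := by
      rw [hRd]
      exact (integral_div t _).symm
    have h5 : |R t / t - ∫ u, A.indicator df (u - t • h) ∂lam| ≤ 2 * C1 * |t| := by
      rw [hRt]; exact hstepA
    calc |R t / t - D2|
        = |(R t / t - ∫ u, A.indicator df (u - t • h) ∂lam)
          + ((∫ u, A.indicator df (u - t • h) ∂lam) - D2)| := by rw [sub_add_sub_cancel]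
      _ ≤ |R t / t - ∫ u, A.indicator df (u - t • h) ∂lam|
          + |(∫ u, A.indicator df (u - t • h) ∂lam) - D2| := abs_add_le _ _
      _ ≤ 2 * C1 * |t| + L * (2 * ‖Aop h‖) * |t| := add_le_add h5 hstepB
      _ = K2 * |t| := by rw [hK2]; ring
  have hlim2 : Tendsto (fun t : ℝ => R t / t) (𝓝[≠] 0) (𝓝 D2) := by
    rw [← tendsto_sub_nhds_zero_iff]
    apply squeeze_zero_norm' (a := fun t : ℝ => K2 * |t|)
    · filter_upwards [self_mem_nhdsWithin] with t ht
      rw [Real.norm_eq_abs]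
      exact hRb t ht
    · have hcont : Tendsto (fun t : ℝ => K2 * |t|) (𝓝 0) (𝓝 (K2 * |0|)) :=
        (continuous_const.mul continuous_abs).tendsto 0
      simpa using hcont.mono_left nhdsWithin_le_nhds
  have hsum : Tendsto (fun t : ℝ => G⁻¹ *
      ((((∫ u, A.indicator f (u - t • h) ∂lam) - ∫ u, A.indicator f u ∂lam) / t) + R t / t))
      (𝓝[≠] 0) (𝓝 (G⁻¹ * (D1 + D2))) :=
    (hlim1.add hlim2).const_mul G⁻¹
  -- the quotient identity
  have hqeq : ∀ t : ℝ, t ≠ 0 →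
      ((μ ((· + t • h) '' A)).toReal - (μ A).toReal) / t
        = G⁻¹ * ((((∫ u, A.indicator f (u - t • h) ∂lam) - ∫ u, A.indicator f u ∂lam) / t)
          + R t / t) := by
    intro t ht
    rw [shift_image h t A]
    rw [hμS _ (hA.preimage (measurable_shift h t)), hμS A hA]
    have hg₀shift_int : Integrable (fun u : X => A.indicator f (u - t • h)) lam := by
      exact integrable_bdd lam (hg₀meas.comp (measurable_shift h t))
        (fun u => abs_le.2 ⟨by linarith [hg₀0 (u - t • h)], hg₀1 _⟩)
    have hRint : Integrable (fun u : X =>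
        A.indicator (fun _ => (1:ℝ)) (u - t • h) * (f u - f (u - t • h))) lam := by
      apply integrable_bdd lam
      · apply Measurable.mul
        · exact (measurable_const.indicator hA).comp (measurable_shift h t)
        · exact hfmeas.sub (hfmeas.comp (measurable_shift h t))
      · intro u
        have h1 : |A.indicator (fun _ => (1:ℝ)) (u - t • h)| ≤ 1 := by
          rw [Set.indicator_apply]
          by_cases hm : u - t • h ∈ A
          · rw [if_pos hm]; norm_num
          · rw [if_neg hm]; norm_num
        have h2 : |f u - f (u - t • h)| ≤ 2 := by
          rw [abs_le]
          constructor
          · nlinarith [hf_pos u, hf_le1 (u - t • h)]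
          · nlinarith [hf_le1 u, hf_pos (u - t • h)]
        calc |A.indicator (fun _ => (1:ℝ)) (u - t • h) * (f u - f (u - t • h))|
            = |A.indicator (fun _ => (1:ℝ)) (u - t • h)| * |f u - f (u - t • h)| := abs_mul _ _
          _ ≤ 1 * 2 := mul_le_mul h1 h2 (abs_nonneg _) zero_le_one
          _ ≤ 2 := by norm_num
    have hsplit : ∫ u, ((fun u : X => u - t • h) ⁻¹' A).indicator f u ∂lam
        = (∫ u, A.indicator f (u - t • h) ∂lam) + R t := by
      rw [hRd]
      rw [← integral_add hg₀shift_int hRint]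
      apply integral_congr_ae
      apply Eventually.of_forall
      intro u
      by_cases hm : u - t • h ∈ A
      · simp only [Set.indicator_apply, Set.mem_preimage, hm, if_true, if_pos, one_mul]
        ring
      · simp only [Set.indicator_apply, Set.mem_preimage, hm, if_false, zero_mul, add_zero]
    rw [hsplit]
    field_simp
    ring
  -- the value of the limit
  have hT : ∫ u in A, (βh u - ⟪Aop u - m, Aop h⟫) ∂μ = G⁻¹ * (D1 + D2) := by
    rw [hμ, restrict_withDensity hA]
    have hdmeas : AEMeasurable (fun u => Real.toNNReal (G⁻¹ * f u)) (lam.restrict A) :=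
      ((measurable_const.mul hfmeas).real_toNNReal).aemeasurable
    rw [show (fun u : X => ENNReal.ofReal (G⁻¹ * f u))
        = fun u : X => ((Real.toNNReal (G⁻¹ * f u) : NNReal) : ℝ≥0∞) from rfl]
    rw [integral_withDensity_eq_integral_smul₀ hdmeas]
    have hptv : ∀ u : X, Real.toNNReal (G⁻¹ * f u) • (βh u - ⟪Aop u - m, Aop h⟫)
        = G⁻¹ * (f u * βh u + df u) := by
      intro u
      rw [NNReal.smul_def, Real.coe_toNNReal _ (mul_nonneg hGinv (hf_pos u).le), hdf,
        smul_eq_mul]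
      simp only []
      ring
    rw [show (fun u : X => Real.toNNReal (G⁻¹ * f u) • (βh u - ⟪Aop u - m, Aop h⟫))
        = fun u : X => G⁻¹ * (f u * βh u + df u) from funext hptv]
    rw [integral_const_mul]
    have hfβ_int : Integrable (fun u => f u * βh u) lam := by
      apply Integrable.bdd_mul hβh hfmeas.aestronglyMeasurable
      exact Eventually.of_forall (fun u => by
        rw [Real.norm_eq_abs, abs_of_pos (hf_pos u)]; exact hf_le1 u)
    have hdfint : Integrable df lam := integrable_bdd lam hdf_meas hdf_bd
    rw [integral_add hfβ_int.integrableOn hdfint.integrableOn]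
    have e1 : ∫ u in A, f u * βh u ∂lam = D1 := by
      rw [hD1, ← integral_indicator hA]
      apply integral_congr_ae
      apply Eventually.of_forall
      intro u
      by_cases hm : u ∈ A
      · simp [Set.indicator_apply, hm]
      · simp [Set.indicator_apply, hm]
    have e2 : ∫ u in A, df u ∂lam = D2 := by
      rw [hD2, ← integral_indicator hA]
    rw [e1, e2]
  rw [hT]
  apply Tendsto.congr' _ hsum
  filter_upwards [self_mem_nhdsWithin] with t ht
  exact (hqeq t ht).symm
end

section
/- Let X be a separable Banach space, λ a Borel probability measure on X, A_op : X → ℝ^M a bounded linear map, m ∈ ℝ^M, h ∈ X, and β_h : X → ℝ measurable. Let f(u) = exp(−½|A_op u − m|²), G = ∫_X f dλ, and let μ be the probability measure with μ(A) = G^{−1} ∫_A f dλ. If ∫_X exp(ε|β_h(u)|) dλ(u) < ∞ for some ε > 0, then ∫_X exp(ε|β_h(u) − ⟨A_op u − m, A_op h⟩_{ℝ^M}|) dμ(u) < ∞ for that same ε. -/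
open MeasureTheory Metric Filter Topology RealInnerProductSpace
open scoped ENNReal

/-- Theorem 4.2 (second part): exponential integrability of the prior logarithmic
derivative transfers to the posterior logarithmic derivative. -/
theorem stmt7 {X : Type*} [NormedAddCommGroup X] [NormedSpace ℝ X] [CompleteSpace X]
    [TopologicalSpace.SeparableSpace X] [MeasurableSpace X] [BorelSpace X]
    {M : ℕ} (lam : Measure X) [IsProbabilityMeasure lam]
    (h : X) (βh : X → ℝ) (hβh_meas : Measurable βh)
    (Aop : X →L[ℝ] EuclideanSpace ℝ (Fin M)) (m : EuclideanSpace ℝ (Fin M))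
    (f : X → ℝ) (hf : f = fun u => Real.exp (-(1/2) * ‖Aop u - m‖ ^ 2))
    (G : ℝ) (hG : G = ∫ u, f u ∂lam)
    (μ : Measure X) (hμ : μ = lam.withDensity (fun u => ENNReal.ofReal (G⁻¹ * f u)))
    (ε : ℝ) (hε : 0 < ε)
    (hint : ∫⁻ u, ENNReal.ofReal (Real.exp (ε * |βh u|)) ∂lam < ⊤) :
    ∫⁻ u, ENNReal.ofReal (Real.exp (ε * |βh u - ⟪Aop u - m, Aop h⟫|)) ∂μ < ⊤ := by
  have hfc : Continuous f := by
    rw [hf]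
    exact (continuous_const.mul
      (((Aop.continuous.sub continuous_const).norm.pow 2))).rexp
  have hfpos : ∀ u, 0 < f u := fun u => by rw [hf]; exact Real.exp_pos _
  have hdens : Measurable fun u => ENNReal.ofReal (G⁻¹ * f u) :=
    (measurable_const.mul hfc.measurable).ennreal_ofReal
  have hip : Continuous fun u : X => ⟪Aop u - m, Aop h⟫ :=
    (Aop.continuous.sub continuous_const).inner continuous_const
  have hg : Measurable fun u => ENNReal.ofReal (Real.exp (ε * |βh u - ⟪Aop u - m, Aop h⟫|)) :=
    ((measurable_const.mul ((hβh_meas.sub hip.measurable).abs)).exp).ennreal_ofReal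
  rw [hμ, lintegral_withDensity_eq_lintegral_mul lam hdens hg]
  set K : ℝ := Real.exp (ε ^ 2 * ‖Aop h‖ ^ 2 / 2) with hK
  have hKpos : 0 < K := Real.exp_pos _
  -- pointwise bound
  have hbound : ∀ u, ((fun u => ENNReal.ofReal (G⁻¹ * f u)) *
      fun u => ENNReal.ofReal (Real.exp (ε * |βh u - ⟪Aop u - m, Aop h⟫|))) u ≤
      ENNReal.ofReal (|G⁻¹| * K) * ENNReal.ofReal (Real.exp (ε * |βh u|)) := by
    intro u
    simp only [Pi.mul_apply]
    rcases le_or_gt G⁻¹ 0 with hGn | hGp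
    · have : G⁻¹ * f u ≤ 0 := mul_nonpos_of_nonpos_of_nonneg hGn (hfpos u).le
      rw [ENNReal.ofReal_eq_zero.2 this, zero_mul]
      exact zero_le
    · rw [← ENNReal.ofReal_mul (mul_nonneg hGp.le (hfpos u).le),
        ← ENNReal.ofReal_mul (by positivity : (0:ℝ) ≤ |G⁻¹| * K)]
      apply ENNReal.ofReal_le_ofReal
      have hcs : |⟪Aop u - m, Aop h⟫| ≤ ‖Aop u - m‖ * ‖Aop h‖ := abs_real_inner_le_norm _ _
      set t := ‖Aop u - m‖ with ht
      set a := ‖Aop h‖ with ha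
      have htn : 0 ≤ t := norm_nonneg _
      have hfK : f u * Real.exp (ε * |⟪Aop u - m, Aop h⟫|) ≤ K := by
        rw [hf, ← Real.exp_add, hK]
        apply Real.exp_le_exp.2
        have h1 : ε * |⟪Aop u - m, Aop h⟫| ≤ ε * (t * a) :=
          mul_le_mul_of_nonneg_left hcs hε.le
        nlinarith [sq_nonneg (t - ε * a)]
      have habs : |βh u - ⟪Aop u - m, Aop h⟫| ≤ |βh u| + |⟪Aop u - m, Aop h⟫| :=
        abs_sub _ _
      have hexp : Real.exp (ε * |βh u - ⟪Aop u - m, Aop h⟫|) ≤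
          Real.exp (ε * |βh u|) * Real.exp (ε * |⟪Aop u - m, Aop h⟫|) := by
        rw [← Real.exp_add]
        apply Real.exp_le_exp.2
        nlinarith [abs_nonneg (βh u), abs_nonneg (⟪Aop u - m, Aop h⟫)]
      have hGabs : G⁻¹ = |G⁻¹| := (abs_of_pos hGp).symm
      calc G⁻¹ * f u * Real.exp (ε * |βh u - ⟪Aop u - m, Aop h⟫|)
          ≤ G⁻¹ * f u * (Real.exp (ε * |βh u|) * Real.exp (ε * |⟪Aop u - m, Aop h⟫|)) := by
            apply mul_le_mul_of_nonneg_left hexp (mul_nonneg hGp.le (hfpos u).le)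
        _ = G⁻¹ * (f u * Real.exp (ε * |⟪Aop u - m, Aop h⟫|)) * Real.exp (ε * |βh u|) := by
            ring
        _ ≤ G⁻¹ * K * Real.exp (ε * |βh u|) := by
            apply mul_le_mul_of_nonneg_right _ (Real.exp_pos _).le
            exact mul_le_mul_of_nonneg_left hfK hGp.le
        _ = |G⁻¹| * K * Real.exp (ε * |βh u|) := by rw [← hGabs]
  calc ∫⁻ u, ((fun u => ENNReal.ofReal (G⁻¹ * f u)) *
        fun u => ENNReal.ofReal (Real.exp (ε * |βh u - ⟪Aop u - m, Aop h⟫|))) u ∂lam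
      ≤ ∫⁻ u, ENNReal.ofReal (|G⁻¹| * K) * ENNReal.ofReal (Real.exp (ε * |βh u|)) ∂lam :=
        lintegral_mono hbound
    _ = ENNReal.ofReal (|G⁻¹| * K) * ∫⁻ u, ENNReal.ofReal (Real.exp (ε * |βh u|)) ∂lam :=
        lintegral_const_mul' _ _ ENNReal.ofReal_ne_top
    _ < ⊤ := ENNReal.mul_lt_top ENNReal.ofReal_lt_top hint
end

section
/- Let X be a separable Banach space, A_op : X → ℝ^M a bounded linear map, m ∈ ℝ^M, and μ a Borel probability measure on X with ∫_X ‖v‖²_X dμ(v) < ∞. Let D ⊆ X, J : D → ℝ, and for each u ∈ D let β_u ∈ L¹(μ) satisfy ∫_X ( β_u(v) − ⟨A_op v − m, A_op u⟩_{ℝ^M} ) dμ(v) = 0. Define G(u) = ∫_X ( ½|A_op u − A_op v|² + J(u) + β_u(v) ) dμ(v) for u ∈ D. Then for all u ∈ D, G(u) = ½|A_op u − m|² + J(u) + C, where C = ½∫_X |A_op v|² dμ(v) − ½|m|² does not depend on u. In particular, a point û ∈ D minimizes G over D if and only if it minimizes u ↦ ½|A_op u − m|² + J(u) over D. -/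
open MeasureTheory Metric Filter Topology RealInnerProductSpace
open scoped ENNReal

/-- Theorem 4.6(1): the Bayes cost built from the homogeneous Bregman distance equals
`½|A u − m|² + J(u)` up to an additive constant; hence the weak MAP estimate
minimizes the Bayes cost. -/
theorem stmt9 {X : Type*} [NormedAddCommGroup X] [NormedSpace ℝ X] [CompleteSpace X]
    [TopologicalSpace.SeparableSpace X] [MeasurableSpace X] [BorelSpace X]
    {M : ℕ} (Aop : X →L[ℝ] EuclideanSpace ℝ (Fin M)) (m : EuclideanSpace ℝ (Fin M))
    (μ : Measure X) [IsProbabilityMeasure μ]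
    (hmom : Integrable (fun v => ‖v‖ ^ 2) μ)
    (D : Set X) (J : X → ℝ) (β : X → X → ℝ)
    (hβint : ∀ u ∈ D, Integrable (β u) μ)
    (hzero : ∀ u ∈ D, ∫ v, (β u v - ⟪Aop v - m, Aop u⟫) ∂μ = 0)
    (G : X → ℝ)
    (hG : ∀ u ∈ D, G u = ∫ v, ((1:ℝ)/2 * ‖Aop u - Aop v‖ ^ 2 + J u + β u v) ∂μ)
    (C : ℝ) (hC : C = (1/2) * (∫ v, ‖Aop v‖ ^ 2 ∂μ) - (1/2) * ‖m‖ ^ 2) :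
    (∀ u ∈ D, G u = (1/2) * ‖Aop u - m‖ ^ 2 + J u + C) ∧
    (∀ uhat ∈ D, ((∀ u ∈ D, G uhat ≤ G u) ↔
      (∀ u ∈ D, (1/2) * ‖Aop uhat - m‖ ^ 2 + J uhat
        ≤ (1/2) * ‖Aop u - m‖ ^ 2 + J u))) := by
  have hAcont : Continuous fun v => Aop v := Aop.continuous
  have hnorm : Integrable (fun v : X => ‖v‖) μ := by
    refine Integrable.mono' ((integrable_const (1:ℝ)).add hmom)
      continuous_norm.aestronglyMeasurable ?_
    filter_upwards with v
    simp only [Pi.add_apply, norm_norm]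
    nlinarith [norm_nonneg v, sq_nonneg (‖v‖ - 1)]
  have hA2 : Integrable (fun v => ‖Aop v‖ ^ 2) μ := by
    refine Integrable.mono' (hmom.const_mul (‖Aop‖ ^ 2))
      ((hAcont.norm.pow 2).aestronglyMeasurable) ?_
    filter_upwards with v
    have h1 := Aop.le_opNorm v
    have h0 : (0:ℝ) ≤ ‖Aop v‖ := norm_nonneg _
    rw [Real.norm_eq_abs, abs_of_nonneg (by positivity)]
    nlinarith [norm_nonneg v, norm_nonneg (Aop v)]
  have hinner : ∀ w : EuclideanSpace ℝ (Fin M),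
      Integrable (fun v => ⟪Aop v, w⟫) μ := by
    intro w
    refine Integrable.mono' (hnorm.const_mul (‖Aop‖ * ‖w‖))
      ((hAcont.inner continuous_const).aestronglyMeasurable) ?_
    filter_upwards with v
    rw [Real.norm_eq_abs]
    calc |⟪Aop v, w⟫| ≤ ‖Aop v‖ * ‖w‖ := abs_real_inner_le_norm _ _
      _ ≤ (‖Aop‖ * ‖v‖) * ‖w‖ := by
          have := Aop.le_opNorm v
          have hw : (0:ℝ) ≤ ‖w‖ := norm_nonneg _
          nlinarith
      _ = ‖Aop‖ * ‖w‖ * ‖v‖ := by ring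
  have key : ∀ u ∈ D, G u = (1/2) * ‖Aop u - m‖ ^ 2 + J u + C := by
    intro u hu
    have hβ := hβint u hu
    have hz := hzero u hu
    have hi : Integrable (fun v => ⟪Aop v - m, Aop u⟫) μ := by
      have heq : (fun v => ⟪Aop v - m, Aop u⟫)
          = fun v => ⟪Aop v, Aop u⟫ - ⟪m, Aop u⟫ := by
        funext v; rw [inner_sub_left]
      rw [heq]
      exact (hinner (Aop u)).sub (integrable_const _)
    have hβeq : ∫ v, β u v ∂μ
        = (∫ v, ⟪Aop v, Aop u⟫ ∂μ) - ⟪m, Aop u⟫ := by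
      have h1 : ∫ v, (β u v - ⟪Aop v - m, Aop u⟫) ∂μ
          = (∫ v, β u v ∂μ) - ∫ v, ⟪Aop v - m, Aop u⟫ ∂μ :=
        integral_sub hβ hi
      have h2 : ∫ v, ⟪Aop v - m, Aop u⟫ ∂μ
          = (∫ v, ⟪Aop v, Aop u⟫ ∂μ) - ⟪m, Aop u⟫ := by
        have heq : (fun v => ⟪Aop v - m, Aop u⟫)
            = fun v => ⟪Aop v, Aop u⟫ - ⟪m, Aop u⟫ := by
          funext v; rw [inner_sub_left]
        rw [heq, integral_sub (hinner (Aop u)) (integrable_const _),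
          integral_const]
        simp
      rw [h1, h2] at hz
      linarith [hz]
    rw [hG u hu]
    have hintrw : (fun v => (1:ℝ)/2 * ‖Aop u - Aop v‖ ^ 2 + J u + β u v)
        = fun v => ((1/2 * ‖Aop u‖ ^ 2 + J u - ⟪Aop v, Aop u⟫)
            + 1/2 * ‖Aop v‖ ^ 2) + β u v := by
      funext v
      have := norm_sub_sq_real (Aop u) (Aop v)
      have hc : ⟪Aop u, Aop v⟫ = ⟪Aop v, Aop u⟫ := real_inner_comm _ _
      rw [this, hc]; ring
    rw [hintrw]
    have i1 : Integrable (fun v => 1/2 * ‖Aop u‖ ^ 2 + J u - ⟪Aop v, Aop u⟫) μ :=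
      (integrable_const _).sub (hinner (Aop u))
    have i2 : Integrable (fun v => 1/2 * ‖Aop v‖ ^ 2) μ := hA2.const_mul _
    have i12 : Integrable (fun v => 1/2 * ‖Aop u‖ ^ 2 + J u - ⟪Aop v, Aop u⟫
        + 1/2 * ‖Aop v‖ ^ 2) μ := i1.add i2
    rw [integral_add i12 hβ, integral_add i1 i2,
      integral_sub (integrable_const _) (hinner (Aop u)), integral_const,
      integral_const_mul, hβeq]
    have hn : ‖Aop u - m‖ ^ 2 = ‖Aop u‖ ^ 2 - 2 * ⟪Aop u, m⟫ + ‖m‖ ^ 2 :=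
      norm_sub_sq_real _ _
    have hc : ⟪m, Aop u⟫ = ⟪Aop u, m⟫ := real_inner_comm _ _
    simp only [measure_univ, probReal_univ, ENNReal.toReal_one, smul_eq_mul, one_mul]
    rw [hC, hn, hc]; ring
  refine ⟨key, fun uhat huhat => ?_⟩
  constructor
  · intro h u hu
    have := h u hu
    rw [key uhat huhat, key u hu] at this
    linarith
  · intro h u hu
    rw [key uhat huhat, key u hu]
    linarith [h u hu]
end

section
/- Let X be a separable Banach space, Y a separable Hilbert space, L : X → Y a bounded linear map, A_op : X → ℝ^M a bounded linear map, and μ a Borel probability measure on X with ∫_X ‖v‖²_X dμ(v) < ∞. Let u_CM = ∫_X v dμ(v) (Bochner integral), let û ∈ X, and let D : X × X → ℝ be such that v ↦ D(û, v) and v ↦ D(u_CM, v) are μ-integrable. If ∫_X ( ½|A_op û − A_op v|² + D(û, v) ) dμ(v) ≤ ∫_X ( ½|A_op u − A_op v|² + D(u, v) ) dμ(v) holds for u = u_CM (e.g. because û minimizes this Bayes cost), and u_CM satisfies ∫_X ( ½|A_op u_CM − A_op v|² + (β/2)‖L u_CM − L v‖²_Y ) dμ(v) ≤ ∫_X ( ½|A_op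 û − A_op v|² + (β/2)‖L û − L v‖²_Y ) dμ(v) for every β > 0, then ∫_X D(û, v) dμ(v) ≤ ∫_X D(u_CM, v) dμ(v). -/
open MeasureTheory Metric Filter Topology
open scoped ENNReal

lemma stmt10_aux {X C : Type*} [NormedAddCommGroup X] [NormedSpace ℝ X]
    [MeasurableSpace X] [BorelSpace X]
    [NormedAddCommGroup C] [NormedSpace ℝ C]
    (T : X →L[ℝ] C) (u : X) (μ : Measure X) [IsProbabilityMeasure μ]
    (hmom : Integrable (fun v => ‖v‖ ^ 2) μ) :
    Integrable (fun v => ‖T u - T v‖ ^ 2) μ := by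
  have hcont : Continuous fun v : X => ‖T u - T v‖ ^ 2 := by
    fun_prop
  have hg : Integrable (fun v : X => 2 * ‖T u‖ ^ 2 + 2 * ‖T‖ ^ 2 * ‖v‖ ^ 2) μ :=
    (integrable_const _).add (hmom.const_mul _)
  refine hg.mono' hcont.aestronglyMeasurable (Filter.Eventually.of_forall fun v => ?_)
  have h1 : ‖T u - T v‖ ≤ ‖T u‖ + ‖T v‖ := norm_sub_le _ _
  have h2 : ‖T v‖ ≤ ‖T‖ * ‖v‖ := T.le_opNorm v
  have h3 : (0:ℝ) ≤ ‖T u - T v‖ := norm_nonneg _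
  have h4 : (0:ℝ) ≤ ‖T u‖ := norm_nonneg _
  have h5 : (0:ℝ) ≤ ‖T v‖ := norm_nonneg _
  rw [Real.norm_eq_abs, abs_of_nonneg (by positivity)]
  nlinarith [sq_nonneg (‖T u‖ - ‖T v‖), sq_nonneg (‖T‖ * ‖v‖)]

/-- Theorem 4.6(2): in terms of the Bayes cost with respect to the (homogeneous Bregman)
distance `D`, a weak MAP estimate is more optimal than the conditional mean estimate. -/
theorem stmt10 {X Y : Type*} [NormedAddCommGroup X] [NormedSpace ℝ X] [CompleteSpace X]
    [TopologicalSpace.SeparableSpace X] [MeasurableSpace X] [BorelSpace X]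
    [NormedAddCommGroup Y] [InnerProductSpace ℝ Y] [CompleteSpace Y]
    [TopologicalSpace.SeparableSpace Y]
    {M : ℕ} (L : X →L[ℝ] Y) (Aop : X →L[ℝ] EuclideanSpace ℝ (Fin M))
    (μ : Measure X) [IsProbabilityMeasure μ]
    (hmom : Integrable (fun v => ‖v‖ ^ 2) μ)
    (uCM : X) (huCM : uCM = ∫ v, v ∂μ)
    (uhat : X) (D : X → X → ℝ)
    (hD1 : Integrable (fun v => D uhat v) μ)
    (hD2 : Integrable (fun v => D uCM v) μ)
    (hmin : ∫ v, ((1:ℝ)/2 * ‖Aop uhat - Aop v‖ ^ 2 + D uhat v) ∂μ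
      ≤ ∫ v, ((1:ℝ)/2 * ‖Aop uCM - Aop v‖ ^ 2 + D uCM v) ∂μ)
    (hCM : ∀ β : ℝ, 0 < β →
      ∫ v, ((1:ℝ)/2 * ‖Aop uCM - Aop v‖ ^ 2 + β / 2 * ‖L uCM - L v‖ ^ 2) ∂μ
        ≤ ∫ v, ((1:ℝ)/2 * ‖Aop uhat - Aop v‖ ^ 2 + β / 2 * ‖L uhat - L v‖ ^ 2) ∂μ) :
    ∫ v, D uhat v ∂μ ≤ ∫ v, D uCM v ∂μ := by
  have hAh := stmt10_aux Aop uhat μ hmom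
  have hAc := stmt10_aux Aop uCM μ hmom
  have hLh := stmt10_aux L uhat μ hmom
  have hLc := stmt10_aux L uCM μ hmom
  -- split hmin
  rw [integral_add (hAh.const_mul _) hD1, integral_add (hAc.const_mul _) hD2] at hmin
  -- key: ∫ fc ≤ ∫ fh
  have key : ∫ v, (1:ℝ)/2 * ‖Aop uCM - Aop v‖ ^ 2 ∂μ
      ≤ ∫ v, (1:ℝ)/2 * ‖Aop uhat - Aop v‖ ^ 2 ∂μ := by
    set G := ∫ v, ‖L uhat - L v‖ ^ 2 ∂μ with hGdef
    have hG : 0 ≤ G := integral_nonneg fun v => by positivity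
    have hGc : 0 ≤ ∫ v, ‖L uCM - L v‖ ^ 2 ∂μ := integral_nonneg fun v => by positivity
    rw [integral_const_mul, integral_const_mul]
    refine le_of_forall_pos_le_add fun ε hε => ?_
    have hβ : 0 < 2 * ε / (G + 1) := by positivity
    have h := hCM _ hβ
    rw [integral_add (hAc.const_mul _) (hLc.const_mul _),
        integral_add (hAh.const_mul _) (hLh.const_mul _),
        integral_const_mul, integral_const_mul, integral_const_mul, integral_const_mul,
        ← hGdef] at h
    have hle : 2 * ε / (G + 1) / 2 * G ≤ ε := by
      rw [div_div, div_mul_eq_mul_div, div_le_iff₀ (by positivity : (0:ℝ) < (G+1)*2)]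
      nlinarith
    nlinarith [mul_nonneg (le_of_lt (by positivity : (0:ℝ) < 2 * ε / (G+1) / 2)) hGc]
  linarith
end

section
/- Let p > 1 and set σ_p = (∫_ℝ exp(−|x|^p) dx)^{−1}, so that π(x) = σ_p exp(−|x|^p) is a probability density on ℝ. Then π is differentiable on ℝ with π'(x) = −p·sign(x)·|x|^{p−1}·π(x), and its Fisher information is finite and given by ∫_ℝ π'(t)²/π(t) dt = p² σ_p ∫_ℝ |t|^{2(p−1)} exp(−|t|^p) dt = 2 p σ_p Γ(2 − 1/p), where Γ is the Gamma function. -/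
open MeasureTheory Filter Set

lemma my_integrable_comp_abs {f : ℝ → ℝ} (hf : IntegrableOn f (Ioi 0)) :
    Integrable fun x => f |x| := by
  have hIoi : IntegrableOn (fun x => f |x|) (Ioi 0) :=
    hf.congr_fun (fun x hx => by rw [abs_of_pos (by exact hx)]) measurableSet_Ioi
  have int_Iic : IntegrableOn (fun x ↦ f |x|) (Iic 0) := by
    rw [← Measure.map_neg_eq_self (volume : Measure ℝ)]
    let m : MeasurableEmbedding fun x : ℝ => -x := (Homeomorph.neg ℝ).measurableEmbedding
    rw [m.integrableOn_map_iff]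
    simp_rw [Function.comp_def, abs_neg, neg_preimage, neg_Iic, neg_zero]
    exact Iff.mpr integrableOn_Ici_iff_integrableOn_Ioi hIoi
  have := int_Iic.union hIoi
  rwa [Iic_union_Ioi, integrableOn_univ] at this

lemma my_key (p : ℝ) (x : ℝ) : |x| ^ (p - 2) * x = Real.sign x * |x| ^ (p - 1) := by
  rcases eq_or_ne x 0 with h | h
  · simp [h]
  · have habs : (0 : ℝ) < |x| := abs_pos.2 h
    have h1 : |x| ^ (p - 1) = |x| ^ (p - 2) * |x| := by
      rw [← Real.rpow_add_one habs.ne']; ring_nf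
    rw [h1]
    rcases lt_or_gt_of_ne h with ht | ht
    · rw [Real.sign_of_neg ht, abs_of_neg ht]; ring
    · rw [Real.sign_of_pos ht, abs_of_pos ht]; ring

/-- Theorem 5.3 (key computation): the density `π(x) = σ_p exp(−|x|^p)`, `p > 1`, is
differentiable with `π'(x) = −p sign(x)|x|^{p−1} π(x)` and has finite Fisher information
`∫ π'(t)²/π(t) dt = p² σ_p ∫ |t|^{2(p−1)} e^{−|t|^p} dt = 2 p σ_p Γ(2 − 1/p)`. -/
theorem stmt11 (p : ℝ) (hp : 1 < p)
    (σp : ℝ) (hσ : σp = (∫ x : ℝ, Real.exp (-|x| ^ p))⁻¹)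
    (pdf : ℝ → ℝ) (hpdf : pdf = fun x => σp * Real.exp (-|x| ^ p)) :
    (∀ x : ℝ, HasDerivAt pdf (-p * Real.sign x * |x| ^ (p - 1) * pdf x) x) ∧
    Integrable (fun t : ℝ => (-p * Real.sign t * |t| ^ (p - 1) * pdf t) ^ 2 / pdf t) ∧
    (∫ t : ℝ, (-p * Real.sign t * |t| ^ (p - 1) * pdf t) ^ 2 / pdf t
      = p ^ 2 * σp * ∫ t : ℝ, |t| ^ (2 * (p - 1)) * Real.exp (-|t| ^ p)) ∧
    (p ^ 2 * σp * (∫ t : ℝ, |t| ^ (2 * (p - 1)) * Real.exp (-|t| ^ p))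
      = 2 * p * σp * Real.Gamma (2 - 1/p)) := by
  have hp0 : 0 < p := by linarith
  -- value of the normalizing integral
  have hnorm : ∫ x : ℝ, Real.exp (-|x| ^ p) = 2 * Real.Gamma (1 / p + 1) := by
    rw [integral_comp_abs (f := fun x => Real.exp (-x ^ p)), integral_exp_neg_rpow hp0]
  have hσpos : 0 < σp := by
    rw [hσ, hnorm]
    have := Real.Gamma_pos_of_pos (show (0:ℝ) < 1 / p + 1 by positivity)
    positivity
  have hpdf_pos : ∀ t : ℝ, 0 < pdf t := fun t => by
    rw [hpdf]; positivity
  -- pointwise identity for the Fisher information integrand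
  have heq : (fun t : ℝ => (-p * Real.sign t * |t| ^ (p - 1) * pdf t) ^ 2 / pdf t)
      = fun t => p ^ 2 * σp * (|t| ^ (2 * (p - 1)) * Real.exp (-|t| ^ p)) := by
    funext t
    rcases eq_or_ne t 0 with h | h
    · subst h
      simp [Real.zero_rpow (show 2 * (p - 1) ≠ 0 by nlinarith)]
    · have habs : (0 : ℝ) < |t| := abs_pos.2 h
      have hs : Real.sign t ^ 2 = 1 := by
        rcases lt_or_gt_of_ne h with ht | ht
        · rw [Real.sign_of_neg ht]; norm_num
        · rw [Real.sign_of_pos ht]; norm_num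
      have h2 : |t| ^ (p - 1) * |t| ^ (p - 1) = |t| ^ (2 * (p - 1)) := by
        rw [← Real.rpow_add habs]; ring_nf
      have expand : (-p * Real.sign t * |t| ^ (p - 1) * pdf t) ^ 2
          = p ^ 2 * Real.sign t ^ 2 * (|t| ^ (p - 1) * |t| ^ (p - 1)) * (pdf t * pdf t) := by
        ring
      rw [expand, hs, h2, hpdf]
      have hE : Real.exp (-|t| ^ p) ≠ 0 := (Real.exp_pos _).ne'
      field_simp
  refine ⟨?_, ?_, ?_, ?_⟩
  · intro x
    have h1 := (hasDerivAt_abs_rpow x hp).neg.exp.const_mul σp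
    rw [hpdf]
    convert h1 using 1
    show -p * Real.sign x * |x| ^ (p - 1) * (σp * Real.exp (-|x| ^ p))
      = σp * (Real.exp (-|x| ^ p) * -(p * |x| ^ (p - 2) * x))
    linear_combination (p * σp * Real.exp (-|x| ^ p)) * my_key p x
    all_goals rfl
  · rw [heq]
    apply Integrable.const_mul
    exact my_integrable_comp_abs
      (integrableOn_rpow_mul_exp_neg_rpow (by linarith) hp0)
  · rw [heq, integral_const_mul]
  · rw [integral_comp_abs (f := fun x => x ^ (2 * (p - 1)) * Real.exp (-x ^ p)),
      integral_rpow_mul_exp_neg_rpow hp0 (by linarith)]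
    have : (2 * (p - 1) + 1) / p = 2 - 1 / p := by field_simp; ring
    rw [this]
    field_simp
end

section
/- Let 1 < p ≤ 2, let d be a positive integer, s, t ∈ ℝ, and let (h_ℓ)_{ℓ≥1} be a real sequence with Σ_{ℓ=1}^∞ ℓ^{(p/d)(ps−(p−1)t)+p/2−1} |h_ℓ|^p < ∞. For real sequences u = (u_ℓ) with ‖u‖ := ( Σ_{ℓ=1}^∞ ℓ^{p(t/d+1/2)−1} |u_ℓ|^p )^{1/p} < ∞, define Φ(u) = Σ_{ℓ=1}^∞ ℓ^{p(s/d+1/2)−1} sign(u_ℓ) |u_ℓ|^{p−1} h_ℓ (the series converges absolutely). Then Φ is sequentially continuous with respect to ‖·‖: if ‖u^n − u‖ → 0 where all u^n and u have finite ‖·‖-norm, then Φ(u^n) → Φ(u). -/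
open Filter Topology


lemma myRpowAddLe {a b α : ℝ} (ha : 0 ≤ a) (hb : 0 ≤ b) (h0 : 0 ≤ α) (h1 : α ≤ 1) :
    (a + b) ^ α ≤ a ^ α + b ^ α := by
  lift a to NNReal using ha
  lift b to NNReal using hb
  rw [← NNReal.coe_add, ← NNReal.coe_rpow, ← NNReal.coe_rpow, ← NNReal.coe_rpow,
    ← NNReal.coe_add, NNReal.coe_le_coe]
  exact NNReal.rpow_add_le_add_rpow a b h0 h1

lemma myRpowSubLe {α a b : ℝ} (h0 : 0 ≤ α) (h1 : α ≤ 1) (hb : 0 ≤ b) (hba : b ≤ a) :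
    a ^ α - b ^ α ≤ (a - b) ^ α := by
  have := myRpowAddLe (a := a - b) (b := b) (by linarith) hb h0 h1
  rw [sub_add_cancel] at this
  linarith

/-- `sign x * |x|^α` is `α`-Hölder with constant 2, for `0 < α ≤ 1`. -/
lemma mySignHolder {α : ℝ} (h0 : 0 < α) (h1 : α ≤ 1) (x y : ℝ) :
    |Real.sign x * |x| ^ α - Real.sign y * |y| ^ α| ≤ 2 * |x - y| ^ α := by
  have key : ∀ z : ℝ, 0 ≤ z → Real.sign z * |z| ^ α = z ^ α := by
    intro z hz
    rcases eq_or_lt_of_le hz with h | h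
    · simp [← h, Real.zero_rpow h0.ne']
    · rw [Real.sign_of_pos h, abs_of_pos h, one_mul]
  have gneg : ∀ z : ℝ, Real.sign (-z) * |-z| ^ α = -(Real.sign z * |z| ^ α) := by
    intro z
    rw [Real.sign_neg, abs_neg]; ring
  have main : ∀ x y : ℝ, 0 ≤ y → y ≤ x →
      |Real.sign x * |x| ^ α - Real.sign y * |y| ^ α| ≤ 2 * |x - y| ^ α := by
    intro x y hy hyx
    rw [key x (hy.trans hyx), key y hy]
    have h2 : x ^ α - y ^ α ≤ (x - y) ^ α := myRpowSubLe h0.le h1 hy hyx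
    have h3 : 0 ≤ x ^ α - y ^ α := by
      have := Real.rpow_le_rpow hy hyx h0.le; linarith
    rw [abs_of_nonneg h3, abs_of_nonneg (by linarith : (0:ℝ) ≤ x - y)]
    have h4 : (0:ℝ) ≤ (x - y) ^ α := Real.rpow_nonneg (by linarith) _
    linarith
  have main2 : ∀ x y : ℝ, 0 ≤ x → 0 ≤ y →
      |Real.sign x * |x| ^ α - Real.sign y * |y| ^ α| ≤ 2 * |x - y| ^ α := by
    intro x y hx hy
    rcases le_total y x with hxy | hxy
    · exact main x y hy hxy
    · rw [abs_sub_comm, abs_sub_comm x y]; exact main y x hx hxy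
  rcases le_total 0 x with hx | hx <;> rcases le_total 0 y with hy | hy
  · exact main2 x y hx hy
  · -- x ≥ 0 ≥ y
    rcases hy.eq_or_lt with h | h
    · subst h; exact main2 x 0 hx le_rfl
    · rw [key x hx]
      have hyy : Real.sign y * |y| ^ α = -((-y) ^ α) := by
        rw [Real.sign_of_neg h, abs_of_neg h]; ring
      rw [hyy]
      have hx' : x ≤ x - y := by linarith
      have hy' : -y ≤ x - y := by linarith
      have b1 : x ^ α ≤ (x - y) ^ α := Real.rpow_le_rpow hx hx' h0.le
      have b2 : (-y) ^ α ≤ (x - y) ^ α := Real.rpow_le_rpow (by linarith) hy' h0.le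
      have hxa : 0 ≤ x ^ α := Real.rpow_nonneg hx _
      have hya : 0 ≤ (-y) ^ α := Real.rpow_nonneg (by linarith) _
      rw [sub_neg_eq_add, abs_of_nonneg (by linarith), abs_of_nonneg (by linarith : (0:ℝ) ≤ x - y)]
      linarith
  · rw [abs_sub_comm, abs_sub_comm x y]
    rcases hx.eq_or_lt with h | h
    · subst h; exact main2 y 0 hy le_rfl
    · rw [key y hy]
      have hxx : Real.sign x * |x| ^ α = -((-x) ^ α) := by
        rw [Real.sign_of_neg h, abs_of_neg h]; ring
      rw [hxx]
      have hy' : y ≤ y - x := by linarith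
      have hx' : -x ≤ y - x := by linarith
      have b1 : y ^ α ≤ (y - x) ^ α := Real.rpow_le_rpow hy hy' h0.le
      have b2 : (-x) ^ α ≤ (y - x) ^ α := Real.rpow_le_rpow (by linarith) hx' h0.le
      have hya : 0 ≤ y ^ α := Real.rpow_nonneg hy _
      have hxa : 0 ≤ (-x) ^ α := Real.rpow_nonneg (by linarith) _
      rw [sub_neg_eq_add, abs_of_nonneg (by linarith), abs_of_nonneg (by linarith : (0:ℝ) ≤ y - x)]
      linarith
  · have := main2 (-x) (-y) (by linarith) (by linarith)
    rw [gneg, gneg, neg_sub_neg, neg_sub_neg, abs_sub_comm y x] at this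
    rw [abs_sub_comm]
    exact this

lemma myPointId {p τ η σ w : ℝ} (hp : 0 < p) (hw : 0 < w)
    (hexp : (p - 1) * τ + η = p * σ) (x c : ℝ) :
    w ^ σ * |x| ^ (p - 1) * |c| =
      (w ^ τ * |x| ^ p) ^ ((p - 1) / p) * (w ^ η * |c| ^ p) ^ (1 / p) := by
  rw [Real.mul_rpow (Real.rpow_nonneg hw.le _) (Real.rpow_nonneg (abs_nonneg x) _),
      Real.mul_rpow (Real.rpow_nonneg hw.le _) (Real.rpow_nonneg (abs_nonneg c) _),
      ← Real.rpow_mul hw.le, ← Real.rpow_mul hw.le,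
      ← Real.rpow_mul (abs_nonneg x), ← Real.rpow_mul (abs_nonneg c)]
  have e1 : p * ((p - 1) / p) = p - 1 := by field_simp
  have e2 : p * (1 / p) = 1 := by field_simp
  rw [e1, e2, Real.rpow_one]
  rw [show w ^ (τ * ((p-1)/p)) * |x| ^ (p-1) * (w ^ (η * (1/p)) * |c|) =
      (w ^ (τ * ((p-1)/p)) * w ^ (η * (1/p))) * (|x| ^ (p-1) * |c|) from by ring,
      ← Real.rpow_add hw]
  have e3 : τ * ((p - 1) / p) + η * (1 / p) = σ := by
    field_simp
    linear_combination hexp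
  rw [e3]; ring

lemma mySummable {p τ η σ : ℝ} (hp1 : 1 < p)
    (hexp : (p - 1) * τ + η = p * σ) (v c : ℕ → ℝ)
    (hv : Summable fun ℓ : ℕ => ((ℓ:ℝ)+1) ^ τ * |v ℓ| ^ p)
    (hc : Summable fun ℓ : ℕ => ((ℓ:ℝ)+1) ^ η * |c ℓ| ^ p) :
    Summable fun ℓ : ℕ => ((ℓ:ℝ)+1) ^ σ * |v ℓ| ^ (p-1) * |c ℓ| := by
  have hp0 : 0 < p := lt_trans one_pos hp1
  apply Summable.of_nonneg_of_le (f := fun ℓ : ℕ =>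
      (p-1)/p * (((ℓ:ℝ)+1) ^ τ * |v ℓ| ^ p) + 1/p * (((ℓ:ℝ)+1) ^ η * |c ℓ| ^ p))
  · intro ℓ; positivity
  · intro ℓ
    have hw : (0:ℝ) < (ℓ:ℝ)+1 := by positivity
    rw [myPointId hp0 hw hexp]
    exact Real.geom_mean_le_arith_mean2_weighted
      (div_nonneg (by linarith) hp0.le) (by positivity) (by positivity) (by positivity)
      (by field_simp; ring)
  · exact (hv.mul_left _).add (hc.mul_left _)

lemma myBound {p τ η σ : ℝ} (hp1 : 1 < p)
    (hexp : (p - 1) * τ + η = p * σ) (v c : ℕ → ℝ)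
    (hv : Summable fun ℓ : ℕ => ((ℓ:ℝ)+1) ^ τ * |v ℓ| ^ p)
    (hc : Summable fun ℓ : ℕ => ((ℓ:ℝ)+1) ^ η * |c ℓ| ^ p)
    (lam : ℝ) (hlam : 0 < lam) :
    (∑' ℓ : ℕ, ((ℓ:ℝ)+1) ^ σ * |v ℓ| ^ (p-1) * |c ℓ|) ≤
      (p-1)/p * (lam * ∑' ℓ : ℕ, ((ℓ:ℝ)+1) ^ τ * |v ℓ| ^ p) +
      1/p * (lam ^ (1-p) * ∑' ℓ : ℕ, ((ℓ:ℝ)+1) ^ η * |c ℓ| ^ p) := by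
  have hp0 : 0 < p := lt_trans one_pos hp1
  have scal : lam ^ ((p-1)/p) * (lam ^ (1-p)) ^ (1/p) = 1 := by
    rw [← Real.rpow_mul hlam.le, ← Real.rpow_add hlam,
      show (p-1)/p + (1-p)*(1/p) = 0 from by field_simp; ring, Real.rpow_zero]
  have key : ∀ ℓ : ℕ, ((ℓ:ℝ)+1) ^ σ * |v ℓ| ^ (p-1) * |c ℓ| ≤
      (p-1)/p * (lam * (((ℓ:ℝ)+1) ^ τ * |v ℓ| ^ p)) +
      1/p * (lam ^ (1-p) * (((ℓ:ℝ)+1) ^ η * |c ℓ| ^ p)) := by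
    intro ℓ
    have hw : (0:ℝ) < (ℓ:ℝ)+1 := by positivity
    have hA : (0:ℝ) ≤ ((ℓ:ℝ)+1) ^ τ * |v ℓ| ^ p := by positivity
    have hB : (0:ℝ) ≤ ((ℓ:ℝ)+1) ^ η * |c ℓ| ^ p := by positivity
    have e : (lam * (((ℓ:ℝ)+1) ^ τ * |v ℓ| ^ p)) ^ ((p-1)/p) *
        (lam ^ (1-p) * (((ℓ:ℝ)+1) ^ η * |c ℓ| ^ p)) ^ (1/p) =
        ((ℓ:ℝ)+1) ^ σ * |v ℓ| ^ (p-1) * |c ℓ| := by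
      rw [Real.mul_rpow hlam.le hA, Real.mul_rpow (Real.rpow_nonneg hlam.le _) hB,
        myPointId hp0 hw hexp]
      calc lam ^ ((p-1)/p) * ((((ℓ:ℝ)+1) ^ τ * |v ℓ| ^ p) ^ ((p-1)/p)) *
            ((lam ^ (1-p)) ^ (1/p) * ((((ℓ:ℝ)+1) ^ η * |c ℓ| ^ p) ^ (1/p)))
          = (lam ^ ((p-1)/p) * (lam ^ (1-p)) ^ (1/p)) *
            (((((ℓ:ℝ)+1) ^ τ * |v ℓ| ^ p) ^ ((p-1)/p)) *
              ((((ℓ:ℝ)+1) ^ η * |c ℓ| ^ p) ^ (1/p))) := by ring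
        _ = _ := by rw [scal, one_mul]
    rw [← e]
    exact Real.geom_mean_le_arith_mean2_weighted
      (div_nonneg (by linarith) hp0.le) (by positivity) (by positivity) (by positivity)
      (by field_simp; ring)
  have h1 : Summable fun ℓ : ℕ => ((ℓ:ℝ)+1) ^ σ * |v ℓ| ^ (p-1) * |c ℓ| :=
    mySummable hp1 hexp v c hv hc
  have h2 : Summable fun ℓ : ℕ =>
      (p-1)/p * (lam * (((ℓ:ℝ)+1) ^ τ * |v ℓ| ^ p)) +
      1/p * (lam ^ (1-p) * (((ℓ:ℝ)+1) ^ η * |c ℓ| ^ p)) :=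
    ((hv.mul_left lam).mul_left _).add ((hc.mul_left _).mul_left _)
  calc (∑' ℓ : ℕ, ((ℓ:ℝ)+1) ^ σ * |v ℓ| ^ (p-1) * |c ℓ|)
      ≤ ∑' ℓ : ℕ, ((p-1)/p * (lam * (((ℓ:ℝ)+1) ^ τ * |v ℓ| ^ p)) +
          1/p * (lam ^ (1-p) * (((ℓ:ℝ)+1) ^ η * |c ℓ| ^ p))) := Summable.tsum_le_tsum key h1 h2
    _ = _ := by
        rw [Summable.tsum_add ((hv.mul_left lam).mul_left _) ((hc.mul_left _).mul_left _),
          tsum_mul_left, tsum_mul_left, tsum_mul_left, tsum_mul_left]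

lemma myDiffRpow {p : ℝ} (hp0 : 0 < p) (a b : ℝ) :
    |a - b| ^ p ≤ 2 ^ p * (|a| ^ p + |b| ^ p) := by
  set m := max |a| |b| with hm
  have hm0 : 0 ≤ m := le_trans (abs_nonneg a) (le_max_left _ _)
  have h1 : |a - b| ≤ 2 * m := by
    have := abs_sub a b
    have ha : |a| ≤ m := le_max_left _ _
    have hb : |b| ≤ m := le_max_right _ _
    calc |a - b| ≤ |a| + |b| := abs_sub _ _
      _ ≤ 2 * m := by linarith
  have h2 : |a - b| ^ p ≤ (2 * m) ^ p :=
    Real.rpow_le_rpow (abs_nonneg _) h1 hp0.le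
  have h3 : (2 * m) ^ p = 2 ^ p * m ^ p := Real.mul_rpow (by norm_num) hm0
  have h4 : m ^ p ≤ |a| ^ p + |b| ^ p := by
    rcases max_cases |a| |b| with ⟨he, _⟩ | ⟨he, _⟩ <;> rw [hm, he]
    · have : (0:ℝ) ≤ |b| ^ p := Real.rpow_nonneg (abs_nonneg _) _
      linarith
    · have : (0:ℝ) ≤ |a| ^ p := Real.rpow_nonneg (abs_nonneg _) _
      linarith
  have h5 : (0:ℝ) ≤ (2:ℝ) ^ p := Real.rpow_nonneg (by norm_num) _
  calc |a - b| ^ p ≤ 2 ^ p * m ^ p := by rw [← h3]; exact h2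
    _ ≤ 2 ^ p * (|a| ^ p + |b| ^ p) := by nlinarith

lemma myAbsSign (z : ℝ) : |Real.sign z| ≤ 1 := by
  rcases lt_trichotomy z 0 with h | h | h
  · simp [Real.sign_of_neg h]
  · simp [h, Real.sign_zero]
  · simp [Real.sign_of_pos h]

/-- Proposition 5.7: for `1 < p ≤ 2`, the (pointwise defined) logarithmic derivative of
the Besov `B^s_p` prior along `h ∈ B^{ps−(p−1)t}_p` is sequentially continuous with
respect to the sequence-space `B^t_p` norm.
Coordinates are indexed by `ℓ : ℕ`, with `ℓ + 1` playing the role of `ℓ ≥ 1`. -/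
theorem stmt16 (p : ℝ) (hp1 : 1 < p) (hp2 : p ≤ 2) (d : ℕ) (hd : 0 < d) (s t : ℝ)
    (h : ℕ → ℝ)
    (hh : Summable (fun ℓ : ℕ =>
      ((ℓ : ℝ) + 1) ^ ((p/(d:ℝ))*(p*s-(p-1)*t) + p/2 - 1) * |h ℓ| ^ p))
    (Φ : (ℕ → ℝ) → ℝ)
    (hΦ : Φ = fun u : ℕ → ℝ => ∑' ℓ : ℕ,
      ((ℓ : ℝ) + 1) ^ (p*(s/(d:ℝ)+1/2)-1) * Real.sign (u ℓ) * |u ℓ| ^ (p-1) * h ℓ)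
    (u : ℕ → ℝ) (uN : ℕ → ℕ → ℝ)
    (hu : Summable (fun ℓ : ℕ => ((ℓ : ℝ) + 1) ^ (p*(t/(d:ℝ)+1/2)-1) * |u ℓ| ^ p))
    (huN : ∀ n : ℕ, Summable (fun ℓ : ℕ =>
      ((ℓ : ℝ) + 1) ^ (p*(t/(d:ℝ)+1/2)-1) * |uN n ℓ| ^ p))
    (hconv : Tendsto
      (fun n : ℕ =>
        (∑' ℓ : ℕ, ((ℓ : ℝ) + 1) ^ (p*(t/(d:ℝ)+1/2)-1) * |uN n ℓ - u ℓ| ^ p) ^ (1/p))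
      atTop (𝓝 0)) :
    Summable (fun ℓ : ℕ =>
      ((ℓ : ℝ) + 1) ^ (p*(s/(d:ℝ)+1/2)-1) * |u ℓ| ^ (p-1) * |h ℓ|) ∧
    (∀ n : ℕ, Summable (fun ℓ : ℕ =>
      ((ℓ : ℝ) + 1) ^ (p*(s/(d:ℝ)+1/2)-1) * |uN n ℓ| ^ (p-1) * |h ℓ|)) ∧
    Tendsto (fun n : ℕ => Φ (uN n)) atTop (𝓝 (Φ u)) := by
  have hp0 : 0 < p := lt_trans one_pos hp1
  have hd' : (d:ℝ) ≠ 0 := Nat.cast_ne_zero.mpr hd.ne'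
  set τ : ℝ := p*(t/(d:ℝ)+1/2)-1 with hτ
  set σ : ℝ := p*(s/(d:ℝ)+1/2)-1 with hσ
  set η : ℝ := (p/(d:ℝ))*(p*s-(p-1)*t) + p/2 - 1 with hη
  have hexp : (p - 1) * τ + η = p * σ := by
    rw [hτ, hσ, hη]; field_simp; ring
  have part1 : Summable fun ℓ : ℕ => ((ℓ:ℝ)+1) ^ σ * |u ℓ| ^ (p-1) * |h ℓ| :=
    mySummable hp1 hexp u h hu hh
  have part2 : ∀ n, Summable fun ℓ : ℕ => ((ℓ:ℝ)+1) ^ σ * |uN n ℓ| ^ (p-1) * |h ℓ| :=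
    fun n => mySummable hp1 hexp (uN n) h (huN n) hh
  refine ⟨part1, part2, ?_⟩
  -- summability of the difference norms
  have hA : ∀ n, Summable fun ℓ : ℕ => ((ℓ:ℝ)+1) ^ τ * |uN n ℓ - u ℓ| ^ p := by
    intro n
    apply Summable.of_nonneg_of_le (f := fun ℓ : ℕ =>
      2 ^ p * (((ℓ:ℝ)+1) ^ τ * |uN n ℓ| ^ p + ((ℓ:ℝ)+1) ^ τ * |u ℓ| ^ p))
    · intro ℓ; positivity
    · intro ℓ
      have hw : (0:ℝ) ≤ ((ℓ:ℝ)+1) ^ τ := by positivity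
      have := myDiffRpow hp0 (uN n ℓ) (u ℓ)
      calc ((ℓ:ℝ)+1) ^ τ * |uN n ℓ - u ℓ| ^ p
          ≤ ((ℓ:ℝ)+1) ^ τ * (2 ^ p * (|uN n ℓ| ^ p + |u ℓ| ^ p)) :=
            mul_le_mul_of_nonneg_left this hw
        _ = 2 ^ p * (((ℓ:ℝ)+1) ^ τ * |uN n ℓ| ^ p + ((ℓ:ℝ)+1) ^ τ * |u ℓ| ^ p) := by ring
    · exact (((huN n).add hu).mul_left _)
  set S : ℕ → ℝ := fun n => ∑' ℓ : ℕ, ((ℓ:ℝ)+1) ^ τ * |uN n ℓ - u ℓ| ^ p with hSdef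
  have hSnn : ∀ n, 0 ≤ S n := fun n => tsum_nonneg (fun ℓ => by positivity)
  have hS : Tendsto S atTop (𝓝 0) := by
    have h1 : Tendsto (fun n => ((S n) ^ (1/p)) ^ p) atTop (𝓝 ((0:ℝ) ^ p)) :=
      hconv.rpow_const (Or.inr hp0.le)
    rw [Real.zero_rpow hp0.ne'] at h1
    have h2 : ∀ n, ((S n) ^ (1/p)) ^ p = S n := by
      intro n
      rw [← Real.rpow_mul (hSnn n), one_div, inv_mul_cancel₀ hp0.ne', Real.rpow_one]
    exact (tendsto_congr h2).mp h1
  set T : ℝ := ∑' ℓ : ℕ, ((ℓ:ℝ)+1) ^ η * |h ℓ| ^ p with hTdef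
  set D : ℕ → ℝ := fun n => ∑' ℓ : ℕ, ((ℓ:ℝ)+1) ^ σ * |uN n ℓ - u ℓ| ^ (p-1) * |h ℓ|
    with hDdef
  have hDnn : ∀ n, 0 ≤ D n := fun n => tsum_nonneg (fun ℓ => by positivity)
  have hD : Tendsto D atTop (𝓝 0) := by
    rw [Metric.tendsto_atTop]
    intro ε hε
    have hlim : Tendsto (fun lam : ℝ => 1/p * (lam ^ (1-p) * T)) atTop (𝓝 0) := by
      have h0 : Tendsto (fun lam : ℝ => lam ^ (-(p-1))) atTop (𝓝 0) :=
        tendsto_rpow_neg_atTop (by linarith)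
      have h1 := (h0.mul_const T).const_mul (1/p)
      simpa [show -(p-1) = 1-p from by ring] using h1
    obtain ⟨lam, hlam2, hlam1⟩ :=
      ((hlim.eventually (gt_mem_nhds (by linarith : (0:ℝ) < ε/2))).and
        (eventually_ge_atTop (1:ℝ))).exists
    have hlam0 : 0 < lam := lt_of_lt_of_le one_pos hlam1
    have hS2 : Tendsto (fun n => (p-1)/p * (lam * S n)) atTop (𝓝 0) := by
      have := (hS.const_mul lam).const_mul ((p-1)/p)
      simpa using this
    obtain ⟨N, hN⟩ := (hS2.eventually (gt_mem_nhds (by linarith : (0:ℝ) < ε/2))).exists_forall_of_atTop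
    refine ⟨N, fun n hn => ?_⟩
    rw [Real.dist_eq, sub_zero, abs_of_nonneg (hDnn n)]
    have hb := myBound hp1 hexp (fun ℓ => uN n ℓ - u ℓ) h (hA n) hh lam hlam0
    have := hN n hn
    calc D n ≤ (p-1)/p * (lam * S n) + 1/p * (lam ^ (1-p) * T) := hb
      _ < ε/2 + ε/2 := by exact add_lt_add this hlam2
      _ = ε := by ring
  -- summability of the signed series
  have habs : ∀ (v : ℕ → ℝ),
      (Summable fun ℓ : ℕ => ((ℓ:ℝ)+1) ^ σ * |v ℓ| ^ (p-1) * |h ℓ|) →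
      Summable fun ℓ : ℕ => ((ℓ:ℝ)+1) ^ σ * Real.sign (v ℓ) * |v ℓ| ^ (p-1) * h ℓ := by
    intro v hv
    apply Summable.of_abs
    apply Summable.of_nonneg_of_le (f := fun ℓ : ℕ => ((ℓ:ℝ)+1) ^ σ * |v ℓ| ^ (p-1) * |h ℓ|)
    · intro ℓ; exact abs_nonneg _
    · intro ℓ
      have hw : (0:ℝ) ≤ ((ℓ:ℝ)+1) ^ σ := by positivity
      have hv' : (0:ℝ) ≤ |v ℓ| ^ (p-1) := Real.rpow_nonneg (abs_nonneg _) _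
      rw [abs_mul, abs_mul, abs_mul, abs_of_nonneg hw, abs_of_nonneg hv']
      have := myAbsSign (v ℓ)
      have h1 : ((ℓ:ℝ)+1) ^ σ * |Real.sign (v ℓ)| ≤ ((ℓ:ℝ)+1) ^ σ := by
        nlinarith [abs_nonneg (Real.sign (v ℓ))]
      have h2 : (0:ℝ) ≤ |h ℓ| := abs_nonneg _
      nlinarith [abs_nonneg (Real.sign (v ℓ)), mul_le_mul_of_nonneg_right
        (mul_le_mul_of_nonneg_right h1 hv') h2]
    · exact hv
  have hfu : Summable fun ℓ : ℕ => ((ℓ:ℝ)+1) ^ σ * Real.sign (u ℓ) * |u ℓ| ^ (p-1) * h ℓ :=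
    habs u part1
  have hfn : ∀ n, Summable fun ℓ : ℕ =>
      ((ℓ:ℝ)+1) ^ σ * Real.sign (uN n ℓ) * |uN n ℓ| ^ (p-1) * h ℓ :=
    fun n => habs (uN n) (part2 n)
  -- the key bound |Φ(uN n) - Φ(u)| ≤ 2 * D n
  have hDsum : ∀ n, Summable fun ℓ : ℕ =>
      ((ℓ:ℝ)+1) ^ σ * |uN n ℓ - u ℓ| ^ (p-1) * |h ℓ| :=
    fun n => mySummable hp1 hexp _ h (hA n) hh
  have hq1 : 0 < p - 1 := by linarith
  have hq2 : p - 1 ≤ 1 := by linarith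
  have key : ∀ n, |Φ (uN n) - Φ u| ≤ 2 * D n := by
    intro n
    rw [hΦ]
    simp only
    rw [← Summable.tsum_sub (hfn n) hfu]
    have hptwise : ∀ ℓ : ℕ,
        |((ℓ:ℝ)+1) ^ σ * Real.sign (uN n ℓ) * |uN n ℓ| ^ (p-1) * h ℓ -
          ((ℓ:ℝ)+1) ^ σ * Real.sign (u ℓ) * |u ℓ| ^ (p-1) * h ℓ| ≤
        2 * (((ℓ:ℝ)+1) ^ σ * |uN n ℓ - u ℓ| ^ (p-1) * |h ℓ|) := by
      intro ℓ
      have hw : (0:ℝ) ≤ ((ℓ:ℝ)+1) ^ σ := by positivity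
      have e : ((ℓ:ℝ)+1) ^ σ * Real.sign (uN n ℓ) * |uN n ℓ| ^ (p-1) * h ℓ -
          ((ℓ:ℝ)+1) ^ σ * Real.sign (u ℓ) * |u ℓ| ^ (p-1) * h ℓ =
          ((ℓ:ℝ)+1) ^ σ * ((Real.sign (uN n ℓ) * |uN n ℓ| ^ (p-1) -
            Real.sign (u ℓ) * |u ℓ| ^ (p-1)) * h ℓ) := by ring
      rw [e, abs_mul, abs_mul, abs_of_nonneg hw]
      have hsh := mySignHolder hq1 hq2 (uN n ℓ) (u ℓ)
      have h2 : |Real.sign (uN n ℓ) * |uN n ℓ| ^ (p-1) -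
          Real.sign (u ℓ) * |u ℓ| ^ (p-1)| * |h ℓ| ≤
          2 * |uN n ℓ - u ℓ| ^ (p-1) * |h ℓ| :=
        mul_le_mul_of_nonneg_right hsh (abs_nonneg _)
      calc ((ℓ:ℝ)+1) ^ σ * (|Real.sign (uN n ℓ) * |uN n ℓ| ^ (p-1) -
            Real.sign (u ℓ) * |u ℓ| ^ (p-1)| * |h ℓ|)
          ≤ ((ℓ:ℝ)+1) ^ σ * (2 * |uN n ℓ - u ℓ| ^ (p-1) * |h ℓ|) :=
            mul_le_mul_of_nonneg_left h2 hw
        _ = 2 * (((ℓ:ℝ)+1) ^ σ * |uN n ℓ - u ℓ| ^ (p-1) * |h ℓ|) := by ring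
    have hdiffsum : Summable fun ℓ : ℕ =>
        ((ℓ:ℝ)+1) ^ σ * Real.sign (uN n ℓ) * |uN n ℓ| ^ (p-1) * h ℓ -
          ((ℓ:ℝ)+1) ^ σ * Real.sign (u ℓ) * |u ℓ| ^ (p-1) * h ℓ := (hfn n).sub hfu
    have habsdiff : Summable fun ℓ : ℕ =>
        |((ℓ:ℝ)+1) ^ σ * Real.sign (uN n ℓ) * |uN n ℓ| ^ (p-1) * h ℓ -
          ((ℓ:ℝ)+1) ^ σ * Real.sign (u ℓ) * |u ℓ| ^ (p-1) * h ℓ| := by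
      apply Summable.of_nonneg_of_le (fun ℓ => abs_nonneg _) hptwise
      exact (hDsum n).mul_left 2
    calc |∑' ℓ : ℕ, (((ℓ:ℝ)+1) ^ σ * Real.sign (uN n ℓ) * |uN n ℓ| ^ (p-1) * h ℓ -
            ((ℓ:ℝ)+1) ^ σ * Real.sign (u ℓ) * |u ℓ| ^ (p-1) * h ℓ)|
        ≤ ∑' ℓ : ℕ, |((ℓ:ℝ)+1) ^ σ * Real.sign (uN n ℓ) * |uN n ℓ| ^ (p-1) * h ℓ -
            ((ℓ:ℝ)+1) ^ σ * Real.sign (u ℓ) * |u ℓ| ^ (p-1) * h ℓ| := by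
          have hst := norm_tsum_le_tsum_norm (f := fun ℓ : ℕ =>
            ((ℓ:ℝ)+1) ^ σ * Real.sign (uN n ℓ) * |uN n ℓ| ^ (p-1) * h ℓ -
            ((ℓ:ℝ)+1) ^ σ * Real.sign (u ℓ) * |u ℓ| ^ (p-1) * h ℓ)
            (by simpa only [Real.norm_eq_abs] using habsdiff)
          simpa only [Real.norm_eq_abs] using hst
      _ ≤ ∑' ℓ : ℕ, 2 * (((ℓ:ℝ)+1) ^ σ * |uN n ℓ - u ℓ| ^ (p-1) * |h ℓ|) :=
          Summable.tsum_le_tsum hptwise habsdiff ((hDsum n).mul_left 2)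
      _ = 2 * D n := tsum_mul_left
  have hzero : Tendsto (fun n => Φ (uN n) - Φ u) atTop (𝓝 0) := by
    apply squeeze_zero_norm (fun n => ?_) (by simpa using hD.const_mul 2)
    simpa using key n
  have := hzero.add_const (Φ u)
  simpa using this
end
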